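/- arXiv:1311.7642 — 6 statements merged into one kernel-verified Lean document; each statement's English description precedes it below -/
import Mathlib

section
/- Let A, B be small categories with finite products, and let f : A ⥤ [Bᵒᵖ, Type] be a functor preserving finite products (where the presheaf category has pointwise products). Then the left Kan extension f^♯ : [Aᵒᵖ, Type] ⥤ [Bᵒᵖ, Type] of f along the Yoneda embedding of A also preserves finite products. -/
open CategoryTheory CategoryTheory.Limits MonoidalCategory

universe u

lemma my_isIso_of_isIso_on_representables {C : Type u} [SmallCategory C]
    {E : Type*} [Category.{u} E]
    {L₁ L₂ : (Cᵒᵖ ⥤ Type u) ⥤ E}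
    [PreservesColimitsOfSize.{u, u} L₁] [PreservesColimitsOfSize.{u, u} L₂]
    (τ : L₁ ⟶ L₂) (h : ∀ X : C, IsIso (τ.app (yoneda.obj X))) : IsIso τ := by
  have : ∀ P, IsIso (τ.app P) := by
    intro P
    have h' : ∀ X : C, IsIso (τ.app (uliftYoneda.{u}.obj X)) := fun X => by
      have : τ.app (uliftYoneda.{u}.obj X) =
          L₁.map ((uliftYonedaIsoYoneda.{u, u} (C := C)).hom.app X) ≫ τ.app _ ≫
            L₂.map ((uliftYonedaIsoYoneda.{u, u} (C := C)).inv.app X) := by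
        rw [τ.naturality_assoc, ← L₂.map_comp, Iso.hom_inv_id_app, L₂.map_id,
          Category.comp_id]
      rw [this]
      haveI := h X
      infer_instance
    have hc := Presheaf.colimitOfRepresentable P
    let hc₁ := isColimitOfPreserves L₁ hc
    let hc₂ := isColimitOfPreserves L₂ hc
    let w : Presheaf.functorToRepresentables P ⋙ L₁ ≅
        Presheaf.functorToRepresentables P ⋙ L₂ :=
      NatIso.ofComponents (fun j => @asIso _ _ _ _ _ (h' _)) (fun g => τ.naturality _)
    have : τ.app P = (IsColimit.coconePointsIsoOfNatIso hc₁ hc₂ w).hom := by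
      apply hc₁.hom_ext
      intro j
      exact (τ.naturality _).trans (IsColimit.comp_coconePointsIsoOfNatIso_hom hc₁ hc₂ w j).symm
    rw [this]
    exact Iso.isIso_hom _
  apply NatIso.isIso_of_isIso_app


/-- If `A`, `B` are small categories with finite products and `f : A ⥤ [Bᵒᵖ, Type]`
preserves finite products, then the left Kan extension of `f` along the Yoneda
embedding also preserves finite products. -/
theorem leftKanExtension_along_yoneda_preserves_finite_products
    {A B : Type u} [SmallCategory A] [SmallCategory B]
    [HasFiniteProducts A] [HasFiniteProducts B]
    (f : A ⥤ (Bᵒᵖ ⥤ Type u)) [PreservesFiniteProducts f] :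
    Nonempty (PreservesFiniteProducts (yoneda.leftKanExtension f)) := by
  classical
  letI : CartesianMonoidalCategory A := CartesianMonoidalCategory.ofHasFiniteProducts (C := A)
  set L := yoneda.leftKanExtension f with hL
  have hU : (Functor.LeftExtension.mk L (yoneda.leftKanExtensionUnit f)).IsUniversal :=
    Functor.isUniversalOfIsLeftKanExtension _ _
  have hU' := IsInitial.isInitialObj
    (Functor.leftExtensionEquivalenceOfIso₁ (uliftYonedaIsoYoneda.{u, u} (C := A)) f).inverse _ hU
  let α : f ⟶ uliftYoneda.{u} ⋙ L := ((Functor.leftExtensionEquivalenceOfIso₁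
    (uliftYonedaIsoYoneda.{u, u} (C := A)) f).inverse.obj
      (Functor.LeftExtension.mk L (yoneda.leftKanExtensionUnit f))).hom
  haveI hαK : L.IsLeftKanExtension α := ⟨⟨hU'⟩⟩
  haveI : IsIso α := Presheaf.isIso_of_isLeftKanExtension.{u, u, u, u, u+1} (L := L) (α := α)
  let e : yoneda ⋙ L ≅ f :=
    Functor.isoWhiskerRight (uliftYonedaIsoYoneda.{u, u} (C := A)).symm L ≪≫ (asIso α).symm
  haveI : PreservesLimitsOfShape (Discrete WalkingPair) f :=
    inferInstance
  haveI : PreservesLimitsOfShape (Discrete PEmpty.{1}) f :=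
    inferInstance
  haveI hLC : PreservesColimitsOfSize.{u, u} L :=
    Presheaf.preservesColimitsOfSize_of_isLeftKanExtension.{u, u, u, u, u, u+1, u} (L := L) (α := α)
  -- tensorLeft and tensorRight on presheaf categories preserve colimits
  haveI htl : ∀ (X : Aᵒᵖ ⥤ Type u), PreservesColimitsOfSize.{u, u} (tensorLeft X) :=
    fun X => (ihom.adjunction X).leftAdjoint_preservesColimits
  haveI htl' : ∀ (X : Bᵒᵖ ⥤ Type u), PreservesColimitsOfSize.{u, u} (tensorLeft X) :=
    fun X => (ihom.adjunction X).leftAdjoint_preservesColimits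
  have tlr : ∀ {D : Type u} [SmallCategory D] (Y : Dᵒᵖ ⥤ Type u),
      tensorLeft Y ≅ tensorRight Y := fun Y =>
    NatIso.ofComponents (fun X => β_ Y X) (by intros; simp)
  haveI htr : ∀ (X : Aᵒᵖ ⥤ Type u), PreservesColimitsOfSize.{u, u} (tensorRight X) :=
    fun X => preservesColimits_of_natIso (tlr X)
  haveI htr' : ∀ (X : Bᵒᵖ ⥤ Type u), PreservesColimitsOfSize.{u, u} (tensorRight X) :=
    fun X => preservesColimits_of_natIso (tlr X)
  -- Step 1: prodComparison is iso on pairs of representables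
  haveI hyl : ∀ a b : A, PreservesLimit (pair a b) (yoneda ⋙ L) := fun a b =>
    preservesLimit_of_natIso _ e.symm
  have h1 : ∀ a b : A, IsIso (CartesianMonoidalCategory.prodComparison L
      (yoneda.obj a) (yoneda.obj b)) := by
    intro a b
    have hcomp := CartesianMonoidalCategory.prodComparison_comp
      (F := (yoneda : A ⥤ _)) (A := a) (B := b) L
    haveI : IsIso (CartesianMonoidalCategory.prodComparison (yoneda ⋙ L) a b) :=
      CartesianMonoidalCategory.isIso_prodComparison_of_preservesLimit_pair _ a b
    rw [hcomp] at this
    exact IsIso.of_isIso_comp_left (L.map (CartesianMonoidalCategory.prodComparison yoneda a b)) _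
  -- Step 2: first argument representable, second arbitrary
  have h2 : ∀ (a : A) (Y : Aᵒᵖ ⥤ Type u),
      IsIso (CartesianMonoidalCategory.prodComparison L (yoneda.obj a) Y) := by
    intro a
    haveI : PreservesColimitsOfSize.{u, u}
        ((curriedTensor (Aᵒᵖ ⥤ Type u)).obj (yoneda.obj a)) := htl _
    haveI : PreservesColimitsOfSize.{u, u}
        ((curriedTensor (Bᵒᵖ ⥤ Type u)).obj (L.obj (yoneda.obj a))) := htl' _
    haveI : IsIso (CartesianMonoidalCategory.prodComparisonNatTrans L (yoneda.obj a)) := by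
      apply my_isIso_of_isIso_on_representables
      intro b
      simpa using h1 a b
    intro Y
    exact inferInstanceAs
      (IsIso ((CartesianMonoidalCategory.prodComparisonNatTrans L (yoneda.obj a)).app Y))
  -- Step 3: both arguments arbitrary
  have h3 : ∀ (X Y : Aᵒᵖ ⥤ Type u), IsIso (CartesianMonoidalCategory.prodComparison L X Y) := by
    intro X Y
    let σ : tensorRight Y ⋙ L ⟶ L ⋙ tensorRight (L.obj Y) :=
      { app := fun X => CartesianMonoidalCategory.prodComparison L X Y
        naturality := fun X X' h => by
          simpa using CartesianMonoidalCategory.prodComparison_natural_whiskerRight L h }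
    haveI : IsIso σ := by
      apply my_isIso_of_isIso_on_representables
      intro a
      exact h2 a Y
    exact NatIso.isIso_app_of_isIso σ X
  haveI : ∀ (X Y : Aᵒᵖ ⥤ Type u), IsIso (CartesianMonoidalCategory.prodComparison L X Y) := h3
  haveI hpair : PreservesLimitsOfShape (Discrete WalkingPair) L :=
    CartesianMonoidalCategory.preservesLimitsOfShape_discrete_walkingPair_of_isIso_prodComparison L
  -- terminal object
  haveI hterm : PreservesLimit (Functor.empty.{0} (Aᵒᵖ ⥤ Type u)) L :=
    preservesTerminal_of_iso L
      (L.mapIso (PreservesTerminal.iso (yoneda : A ⥤ _)).symm ≪≫ e.app (⊤_ A) ≪≫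
        PreservesTerminal.iso f)
  haveI : PreservesLimitsOfShape (Discrete PEmpty.{1}) L :=
    preservesLimitsOfShape_pempty_of_preservesTerminal L
  exact ⟨PreservesFiniteProducts.of_preserves_binary_and_terminal L⟩
end

section
/- Let A be a small monoidal category. The Day convolution monoidal structure on the presheaf category [Aᵒᵖ, Type] makes the Yoneda embedding y : A ⥤ [Aᵒᵖ, Type] a strong monoidal functor: there are natural isomorphisms y(a) ⊛ y(b) ≅ y(a ⊗ b) and 𝟙_Day ≅ y(𝟙_A), coherent with the associators and unitors. -/
open CategoryTheory Opposite MonoidalCategory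

universe u

namespace DayConv

variable {A : Type u} [SmallCategory A] [MonoidalCategory A]

/-- Data for an element of the Day convolution coend
`(F ⊛ G)(c) = ∫^{a,b} A(c, a ⊗ b) × F(a) × G(b)`. -/
structure Pt (F G : Aᵒᵖ ⥤ Type u) (c : Aᵒᵖ) : Type u where
  a : A
  b : A
  h : c.unop ⟶ a ⊗ b
  x : F.obj (op a)
  y : G.obj (op b)

/-- The coend relation for Day convolution. -/
inductive Rel (F G : Aᵒᵖ ⥤ Type u) (c : Aᵒᵖ) : Pt F G c → Pt F G c → Prop
  | mk {a a' b b' : A} (u : a ⟶ a') (v : b ⟶ b') (h : c.unop ⟶ a ⊗ b)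
      (x : F.obj (op a')) (y : G.obj (op b')) :
      Rel F G c ⟨a, b, h, F.map u.op x, G.map v.op y⟩ ⟨a', b', h ≫ (u ⊗ₘ v), x, y⟩

/-- The Day convolution tensor product of two presheaves, on objects. -/
def DayObj (F G : Aᵒᵖ ⥤ Type u) : Aᵒᵖ ⥤ Type u where
  obj c := Quot (Rel F G c)
  map {c c'} w :=
    TypeCat.ofHom (Quot.lift (fun (p : Pt F G c) => Quot.mk (Rel F G c') ⟨p.a, p.b, w.unop ≫ p.h, p.x, p.y⟩)
      (by
        rintro p q r
        cases r with
        | mk u v h x y =>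
          have hq := Quot.sound (Rel.mk (F := F) (G := G) (c := c')
            u v (w.unop ≫ h) x y)
          simpa [Category.assoc] using hq))
  map_id c := by
    ext z
    induction z using Quot.ind with
    | _ p =>
      show Quot.mk (Rel F G c) ⟨p.a, p.b, (𝟙 c).unop ≫ p.h, p.x, p.y⟩ = Quot.mk (Rel F G c) p
      rw [show (𝟙 c).unop ≫ p.h = p.h by simp]
  map_comp {c c' c''} w w' := by
    ext z
    induction z using Quot.ind with
    | _ p =>
      show Quot.mk (Rel F G c'') ⟨p.a, p.b, (w ≫ w').unop ≫ p.h, p.x, p.y⟩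
        = Quot.mk (Rel F G c'') ⟨p.a, p.b, w'.unop ≫ w.unop ≫ p.h, p.x, p.y⟩
      rw [show (w ≫ w').unop ≫ p.h = w'.unop ≫ w.unop ≫ p.h by simp]

section Aux

variable {F F' G G' H K : Aᵒᵖ ⥤ Type u}

/-- Constructor for elements of the Day convolution. -/
def dayMk (F G : Aᵒᵖ ⥤ Type u) (c : Aᵒᵖ) (a b : A) (h : c.unop ⟶ a ⊗ b)
    (x : F.obj (op a)) (y : G.obj (op b)) : (DayObj F G).obj c :=
  Quot.mk (Rel F G c) ⟨a, b, h, x, y⟩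

@[simp] lemma dayObj_map_mk {c c' : Aᵒᵖ} (w : c ⟶ c') (a b : A) (h : c.unop ⟶ a ⊗ b)
    (x : F.obj (op a)) (y : G.obj (op b)) :
    (DayObj F G).map w (dayMk F G c a b h x y) = dayMk F G c' a b (w.unop ≫ h) x y := rfl

lemma dayMk_congr {c : Aᵒᵖ} {a b : A} {h h' : c.unop ⟶ a ⊗ b}
    {x : F.obj (op a)} {y : G.obj (op b)} (e : h = h') :
    dayMk F G c a b h x y = dayMk F G c a b h' x y := by rw [e]

lemma day_rel {c : Aᵒᵖ} {a a' b b' : A} (u : a ⟶ a') (v : b ⟶ b') (h : c.unop ⟶ a ⊗ b)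
    (x : F.obj (op a')) (y : G.obj (op b')) :
    dayMk F G c a b h (F.map u.op x) (G.map v.op y) = dayMk F G c a' b' (h ≫ (u ⊗ₘ v)) x y :=
  Quot.sound (Rel.mk u v h x y)

lemma day_rel_left {c : Aᵒᵖ} {a a' b : A} (u : a ⟶ a') (h : c.unop ⟶ a ⊗ b)
    (x : F.obj (op a')) (y : G.obj (op b)) :
    dayMk F G c a b h (F.map u.op x) y = dayMk F G c a' b (h ≫ u ▷ b) x y := by
  have := day_rel (F := F) (G := G) u (𝟙 b) h x y
  simpa [MonoidalCategory.tensorHom_id] using this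

lemma day_rel_right {c : Aᵒᵖ} {a b b' : A} (v : b ⟶ b') (h : c.unop ⟶ a ⊗ b)
    (x : F.obj (op a)) (y : G.obj (op b')) :
    dayMk F G c a b h x (G.map v.op y) = dayMk F G c a b' (h ≫ a ◁ v) x y := by
  have := day_rel (F := F) (G := G) (𝟙 a) v h x y
  simpa [MonoidalCategory.id_tensorHom] using this

/-- Functoriality of Day convolution in both arguments. -/
def dayHom (α : F ⟶ F') (β : G ⟶ G') : DayObj F G ⟶ DayObj F' G' where
  app c := TypeCat.ofHom (Quot.lift
    (fun (p : Pt F G c) => dayMk F' G' c p.a p.b p.h (α.app _ p.x) (β.app _ p.y))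
    (by
      rintro p q r
      cases r with
      | mk u v h x y =>
        dsimp
        rw [FunctorToTypes.naturality, FunctorToTypes.naturality]
        exact day_rel u v h _ _))
  naturality c c' w := by
    ext z
    induction z using Quot.ind with
    | _ p => rfl

@[simp] lemma dayHom_mk (α : F ⟶ F') (β : G ⟶ G') (c : Aᵒᵖ) (a b : A) (h : c.unop ⟶ a ⊗ b)
    (x : F.obj (op a)) (y : G.obj (op b)) :
    (dayHom α β).app c (dayMk F G c a b h x y)
      = dayMk F' G' c a b h (α.app _ x) (β.app _ y) := rfl

/-- The forward direction of the Day convolution associator. -/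
def assocHom (F G H : Aᵒᵖ ⥤ Type u) : DayObj (DayObj F G) H ⟶ DayObj F (DayObj G H) where
  app c := TypeCat.ofHom (Quot.lift
    (fun (p : Pt (DayObj F G) H c) => Quot.lift
      (fun (q : Pt F G (op p.a)) => dayMk F (DayObj G H) c q.a (q.b ⊗ p.b)
        (p.h ≫ q.h ▷ p.b ≫ (α_ q.a q.b p.b).hom) q.x
        (dayMk G H (op (q.b ⊗ p.b)) q.b p.b (𝟙 _) q.y p.y))
      (by
        rintro q q' r
        cases r with
        | @mk s s' t t' u v k x y =>
          show dayMk F (DayObj G H) c s (t ⊗ p.b) (p.h ≫ k ▷ p.b ≫ (α_ s t p.b).hom)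
              (F.map u.op x) (dayMk G H (op (t ⊗ p.b)) t p.b (𝟙 _) (G.map v.op y) p.y)
            = dayMk F (DayObj G H) c s' (t' ⊗ p.b)
              (p.h ≫ (k ≫ (u ⊗ₘ v)) ▷ p.b ≫ (α_ s' t' p.b).hom) x
              (dayMk G H (op (t' ⊗ p.b)) t' p.b (𝟙 _) y p.y)
          have e1 : dayMk G H (op (t ⊗ p.b)) t p.b (𝟙 _) (G.map v.op y) p.y
              = (DayObj G H).map (v ▷ p.b).op (dayMk G H (op (t' ⊗ p.b)) t' p.b (𝟙 _) y p.y) := by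
            rw [dayObj_map_mk]
            have := day_rel_left (F := G) (G := H) v (𝟙 (t ⊗ p.b)) y p.y
            simp only [Category.id_comp, Category.comp_id] at this ⊢
            exact this
          rw [e1, day_rel u (v ▷ p.b)]
          exact dayMk_congr (by simp [MonoidalCategory.tensorHom_def, whisker_exchange])
      )
      p.x)
    (by
      rintro p p' r
      cases r with
      | @mk e e' d d' U V h X w =>
        induction X using Quot.ind with
        | _ q =>
          obtain ⟨s, t, k, xs, yt⟩ := q
          show dayMk F (DayObj G H) c s (t ⊗ d) (h ≫ (U ≫ k) ▷ d ≫ (α_ s t d).hom) xs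
              (dayMk G H (op (t ⊗ d)) t d (𝟙 _) yt (H.map V.op w))
            = dayMk F (DayObj G H) c s (t ⊗ d') ((h ≫ (U ⊗ₘ V)) ≫ k ▷ d' ≫ (α_ s t d').hom) xs
              (dayMk G H (op (t ⊗ d')) t d' (𝟙 _) yt w)
          have e1 : dayMk G H (op (t ⊗ d)) t d (𝟙 _) yt (H.map V.op w)
              = (DayObj G H).map (t ◁ V).op (dayMk G H (op (t ⊗ d')) t d' (𝟙 _) yt w) := by
            rw [dayObj_map_mk]
            have := day_rel_right (F := G) (G := H) V (𝟙 (t ⊗ d)) yt w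
            simp only [Category.id_comp, Category.comp_id] at this ⊢
            exact this
          rw [e1]
          have e2 := day_rel (F := F) (G := DayObj G H) (𝟙 s) (t ◁ V)
            (h ≫ (U ≫ k) ▷ d ≫ (α_ s t d).hom) xs
            (dayMk G H (op (t ⊗ d')) t d' (𝟙 _) yt w)
          simp only [op_id, FunctorToTypes.map_id_apply] at e2
          rw [e2]
          refine dayMk_congr ?_
          rw [MonoidalCategory.id_tensorHom]
          simp only [MonoidalCategory.tensorHom_def, whisker_exchange, MonoidalCategory.whiskerLeft_comp,
            Category.assoc, comp_whiskerRight, ← associator_naturality_right]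
          simp [whisker_exchange_assoc, ← whisker_exchange]))
  naturality c c' w := by
    ext z
    induction z using Quot.ind with
    | _ p =>
      obtain ⟨e, d, h, X, y⟩ := p
      induction X using Quot.ind with
      | _ q =>
        obtain ⟨s, t, k, xs, yt⟩ := q
        exact dayMk_congr (by simp)

@[simp] lemma assocHom_mk {F G H : Aᵒᵖ ⥤ Type u} (c : Aᵒᵖ) (e d : A) (h : c.unop ⟶ e ⊗ d)
    (a b : A) (k : e ⟶ a ⊗ b) (x : F.obj (op a)) (y : G.obj (op b)) (z : H.obj (op d)) :
    (assocHom F G H).app c (dayMk (DayObj F G) H c e d h (dayMk F G (op e) a b k x y) z)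
      = dayMk F (DayObj G H) c a (b ⊗ d) (h ≫ k ▷ d ≫ (α_ a b d).hom) x
        (dayMk G H (op (b ⊗ d)) b d (𝟙 _) y z) := rfl

/-- The inverse direction of the Day convolution associator. -/
def assocInv (F G H : Aᵒᵖ ⥤ Type u) : DayObj F (DayObj G H) ⟶ DayObj (DayObj F G) H where
  app c := TypeCat.ofHom (Quot.lift
    (fun (p : Pt F (DayObj G H) c) => Quot.lift
      (fun (q : Pt G H (op p.b)) => dayMk (DayObj F G) H c (p.a ⊗ q.a) q.b
        (p.h ≫ p.a ◁ q.h ≫ (α_ p.a q.a q.b).inv)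
        (dayMk F G (op (p.a ⊗ q.a)) p.a q.a (𝟙 _) p.x q.x) q.y)
      (by
        rintro q q' r
        cases r with
        | @mk s s' t t' u v k x y =>
          show dayMk (DayObj F G) H c (p.a ⊗ s) t (p.h ≫ p.a ◁ k ≫ (α_ p.a s t).inv)
              (dayMk F G (op (p.a ⊗ s)) p.a s (𝟙 _) p.x (G.map u.op x)) (H.map v.op y)
            = dayMk (DayObj F G) H c (p.a ⊗ s') t'
              (p.h ≫ p.a ◁ (k ≫ (u ⊗ₘ v)) ≫ (α_ p.a s' t').inv)
              (dayMk F G (op (p.a ⊗ s')) p.a s' (𝟙 _) p.x x) y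
          have e1 : dayMk F G (op (p.a ⊗ s)) p.a s (𝟙 _) p.x (G.map u.op x)
              = (DayObj F G).map (p.a ◁ u).op (dayMk F G (op (p.a ⊗ s')) p.a s' (𝟙 _) p.x x) := by
            rw [dayObj_map_mk]
            have := day_rel_right (F := F) (G := G) u (𝟙 (p.a ⊗ s)) p.x x
            simp only [Category.id_comp, Category.comp_id] at this ⊢
            exact this
          rw [e1, day_rel (p.a ◁ u) v]
          exact dayMk_congr (by simp [MonoidalCategory.tensorHom_def, whisker_exchange])
      )
      p.y)
    (by
      rintro p p' r
      cases r with
      | @mk a a' e e' U V h x Y =>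
        induction Y using Quot.ind with
        | _ q =>
          obtain ⟨s, t, k, ys, zt⟩ := q
          show dayMk (DayObj F G) H c (a ⊗ s) t (h ≫ a ◁ (V ≫ k) ≫ (α_ a s t).inv)
              (dayMk F G (op (a ⊗ s)) a s (𝟙 _) (F.map U.op x) ys) zt
            = dayMk (DayObj F G) H c (a' ⊗ s) t ((h ≫ (U ⊗ₘ V)) ≫ a' ◁ k ≫ (α_ a' s t).inv)
              (dayMk F G (op (a' ⊗ s)) a' s (𝟙 _) x ys) zt
          have e1 : dayMk F G (op (a ⊗ s)) a s (𝟙 _) (F.map U.op x) ys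
              = (DayObj F G).map (U ▷ s).op (dayMk F G (op (a' ⊗ s)) a' s (𝟙 _) x ys) := by
            rw [dayObj_map_mk]
            have := day_rel_left (F := F) (G := G) U (𝟙 (a ⊗ s)) x ys
            simp only [Category.id_comp, Category.comp_id] at this ⊢
            exact this
          rw [e1]
          have e2 := day_rel (F := DayObj F G) (G := H) (U ▷ s) (𝟙 t)
            (h ≫ a ◁ (V ≫ k) ≫ (α_ a s t).inv)
            (dayMk F G (op (a' ⊗ s)) a' s (𝟙 _) x ys) zt
          simp only [op_id, FunctorToTypes.map_id_apply] at e2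
          rw [e2]
          refine dayMk_congr ?_
          rw [MonoidalCategory.tensorHom_id, MonoidalCategory.tensorHom_def]
          simp only [MonoidalCategory.whiskerLeft_comp, Category.assoc,
            associator_inv_naturality_left_assoc, ← comp_whiskerRight_assoc]
          simp [← whisker_exchange_assoc, ← whisker_exchange]))
  naturality c c' w := by
    ext z
    induction z using Quot.ind with
    | _ p =>
      obtain ⟨e, d, h, x, Y⟩ := p
      induction Y using Quot.ind with
      | _ q =>
        obtain ⟨s, t, k, ys, zt⟩ := q
        exact dayMk_congr (by simp)

@[simp] lemma assocInv_mk {F G H : Aᵒᵖ ⥤ Type u} (c : Aᵒᵖ) (a e : A) (h : c.unop ⟶ a ⊗ e)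
    (b d : A) (k : e ⟶ b ⊗ d) (x : F.obj (op a)) (y : G.obj (op b)) (z : H.obj (op d)) :
    (assocInv F G H).app c (dayMk F (DayObj G H) c a e h x (dayMk G H (op e) b d k y z))
      = dayMk (DayObj F G) H c (a ⊗ b) d (h ≫ a ◁ k ≫ (α_ a b d).inv)
        (dayMk F G (op (a ⊗ b)) a b (𝟙 _) x y) z := rfl

/-- The Day convolution associator. -/
def assocIso (F G H : Aᵒᵖ ⥤ Type u) : DayObj (DayObj F G) H ≅ DayObj F (DayObj G H) where
  hom := assocHom F G H
  inv := assocInv F G H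
  hom_inv_id := by
    ext c z
    induction z using Quot.ind with
    | _ p =>
      obtain ⟨e, d, h, X, w⟩ := p
      induction X using Quot.ind with
      | _ q =>
        obtain ⟨s, t, k, x, y⟩ := q
        show dayMk (DayObj F G) H c (s ⊗ t) d
            ((h ≫ k ▷ d ≫ (α_ s t d).hom) ≫ s ◁ (𝟙 (t ⊗ d)) ≫ (α_ s t d).inv)
            (dayMk F G (op (s ⊗ t)) s t (𝟙 _) x y) w
          = dayMk (DayObj F G) H c e d h (dayMk F G (op e) s t k x y) w
        have e0 : dayMk F G (op e) s t k x y
            = (DayObj F G).map k.op (dayMk F G (op (s ⊗ t)) s t (𝟙 _) x y) := by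
          rw [dayObj_map_mk]; exact dayMk_congr (by simp)
        rw [e0, day_rel_left k]
        exact dayMk_congr (by simp)
  inv_hom_id := by
    ext c z
    induction z using Quot.ind with
    | _ p =>
      obtain ⟨a, e, h, x, Y⟩ := p
      induction Y using Quot.ind with
      | _ q =>
        obtain ⟨s, t, k, y, w⟩ := q
        show dayMk F (DayObj G H) c a (s ⊗ t)
            ((h ≫ a ◁ k ≫ (α_ a s t).inv) ≫ (𝟙 (a ⊗ s)) ▷ t ≫ (α_ a s t).hom) x
            (dayMk G H (op (s ⊗ t)) s t (𝟙 _) y w)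
          = dayMk F (DayObj G H) c a e h x (dayMk G H (op e) s t k y w)
        have e0 : dayMk G H (op e) s t k y w
            = (DayObj G H).map k.op (dayMk G H (op (s ⊗ t)) s t (𝟙 _) y w) := by
          rw [dayObj_map_mk]; exact dayMk_congr (by simp)
        rw [e0, day_rel_right k]
        exact dayMk_congr (by simp)
/-- The left unitor for Day convolution, forward direction. -/
def lunitHom (F : Aᵒᵖ ⥤ Type u) : DayObj (yoneda.obj (𝟙_ A)) F ⟶ F where
  app c := TypeCat.ofHom (Quot.lift
    (fun (p : Pt (yoneda.obj (𝟙_ A)) F c) => F.map (p.h ≫ p.x ▷ p.b ≫ (λ_ p.b).hom).op p.y)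
    (by
      rintro p q r
      cases r with
      | @mk a a' b b' u v h x y =>
        show F.map (h ≫ (u ≫ x) ▷ b ≫ (λ_ b).hom).op (F.map v.op y)
          = F.map ((h ≫ (u ⊗ₘ v)) ≫ x ▷ b' ≫ (λ_ b').hom).op y
        rw [← FunctorToTypes.map_comp_apply, ← op_comp,
          show (h ≫ (u ≫ x) ▷ b ≫ (λ_ b).hom) ≫ v
              = (h ≫ (u ⊗ₘ v)) ≫ x ▷ b' ≫ (λ_ b').hom from by
            simp only [MonoidalCategory.tensorHom_def, comp_whiskerRight, Category.assoc,
              ← leftUnitor_naturality, whisker_exchange_assoc]]))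
  naturality c c' w := by
    ext z
    induction z using Quot.ind with
    | _ p =>
      show F.map ((w.unop ≫ p.h) ≫ p.x ▷ p.b ≫ (λ_ p.b).hom).op p.y
        = F.map w (F.map (p.h ≫ p.x ▷ p.b ≫ (λ_ p.b).hom).op p.y)
      rw [← FunctorToTypes.map_comp_apply]
      rw [← w.op_unop, ← op_comp]
      simp

@[simp] lemma lunitHom_mk {F : Aᵒᵖ ⥤ Type u} (c : Aᵒᵖ) (a b : A) (h : c.unop ⟶ a ⊗ b)
    (x : a ⟶ 𝟙_ A) (y : F.obj (op b)) :
    (lunitHom F).app c (dayMk (yoneda.obj (𝟙_ A)) F c a b h x y)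
      = F.map (h ≫ x ▷ b ≫ (λ_ b).hom).op y := rfl

/-- The left unitor for Day convolution, inverse direction. -/
def lunitInv (F : Aᵒᵖ ⥤ Type u) : F ⟶ DayObj (yoneda.obj (𝟙_ A)) F where
  app c := TypeCat.ofHom fun x => dayMk (yoneda.obj (𝟙_ A)) F c (𝟙_ A) c.unop (λ_ c.unop).inv (𝟙 (𝟙_ A)) x
  naturality c c' w := by
    ext x
    show dayMk (yoneda.obj (𝟙_ A)) F c' (𝟙_ A) c'.unop (λ_ c'.unop).inv (𝟙 (𝟙_ A))
        (F.map (w.unop).op x)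
      = dayMk (yoneda.obj (𝟙_ A)) F c' (𝟙_ A) c.unop (w.unop ≫ (λ_ c.unop).inv) (𝟙 (𝟙_ A)) x
    rw [day_rel_right w.unop]
    exact dayMk_congr (by simp)

/-- The left unitor for Day convolution. -/
def lunitIso (F : Aᵒᵖ ⥤ Type u) : DayObj (yoneda.obj (𝟙_ A)) F ≅ F where
  hom := lunitHom F
  inv := lunitInv F
  hom_inv_id := by
    ext c z
    induction z using Quot.ind with
    | _ p =>
      obtain ⟨a, b, h, x, y⟩ := p
      show dayMk (yoneda.obj (𝟙_ A)) F c (𝟙_ A) c.unop (λ_ c.unop).inv (𝟙 (𝟙_ A))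
          (F.map (h ≫ x ▷ b ≫ (λ_ b).hom).op y)
        = dayMk (yoneda.obj (𝟙_ A)) F c a b h x y
      rw [day_rel_right (h ≫ x ▷ b ≫ (λ_ b).hom)]
      have e1 : dayMk (yoneda.obj (𝟙_ A)) F c a b h x y
          = dayMk (yoneda.obj (𝟙_ A)) F c a b h
            ((yoneda.obj (𝟙_ A)).map x.op (𝟙 (𝟙_ A))) y := by
        apply congrArg (fun t => dayMk (yoneda.obj (𝟙_ A)) F c a b h t y)
        simp
      rw [e1, day_rel_left x]
      exact dayMk_congr (by
        simp only [← leftUnitor_inv_naturality_assoc, ← leftUnitor_inv_naturality]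
        simp [whisker_exchange])
  inv_hom_id := by
    ext c x
    show F.map ((λ_ c.unop).inv ≫ (𝟙 (𝟙_ A)) ▷ c.unop ≫ (λ_ c.unop).hom).op x = x
    simp

/-- The right unitor for Day convolution, forward direction. -/
def runitHom (F : Aᵒᵖ ⥤ Type u) : DayObj F (yoneda.obj (𝟙_ A)) ⟶ F where
  app c := TypeCat.ofHom (Quot.lift
    (fun (p : Pt F (yoneda.obj (𝟙_ A)) c) => F.map (p.h ≫ p.a ◁ p.y ≫ (ρ_ p.a).hom).op p.x)
    (by
      rintro p q r
      cases r with
      | @mk a a' b b' u v h x y =>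
        show F.map (h ≫ a ◁ (v ≫ y) ≫ (ρ_ a).hom).op (F.map u.op x)
          = F.map ((h ≫ (u ⊗ₘ v)) ≫ a' ◁ y ≫ (ρ_ a').hom).op x
        rw [← FunctorToTypes.map_comp_apply, ← op_comp,
          show (h ≫ a ◁ (v ≫ y) ≫ (ρ_ a).hom) ≫ u
              = (h ≫ (u ⊗ₘ v)) ≫ a' ◁ y ≫ (ρ_ a').hom from by
            simp only [MonoidalCategory.tensorHom_def, MonoidalCategory.whiskerLeft_comp, Category.assoc,
              ← rightUnitor_naturality, ← whisker_exchange_assoc]]))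
  naturality c c' w := by
    ext z
    induction z using Quot.ind with
    | _ p =>
      show F.map ((w.unop ≫ p.h) ≫ p.a ◁ p.y ≫ (ρ_ p.a).hom).op p.x
        = F.map w (F.map (p.h ≫ p.a ◁ p.y ≫ (ρ_ p.a).hom).op p.x)
      rw [← FunctorToTypes.map_comp_apply]
      rw [← w.op_unop, ← op_comp]
      simp

@[simp] lemma runitHom_mk {F : Aᵒᵖ ⥤ Type u} (c : Aᵒᵖ) (a b : A) (h : c.unop ⟶ a ⊗ b)
    (x : F.obj (op a)) (y : b ⟶ 𝟙_ A) :
    (runitHom F).app c (dayMk F (yoneda.obj (𝟙_ A)) c a b h x y)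
      = F.map (h ≫ a ◁ y ≫ (ρ_ a).hom).op x := rfl

/-- The right unitor for Day convolution, inverse direction. -/
def runitInv (F : Aᵒᵖ ⥤ Type u) : F ⟶ DayObj F (yoneda.obj (𝟙_ A)) where
  app c := TypeCat.ofHom fun x => dayMk F (yoneda.obj (𝟙_ A)) c c.unop (𝟙_ A) (ρ_ c.unop).inv x (𝟙 (𝟙_ A))
  naturality c c' w := by
    ext x
    show dayMk F (yoneda.obj (𝟙_ A)) c' c'.unop (𝟙_ A) (ρ_ c'.unop).inv
        (F.map (w.unop).op x) (𝟙 (𝟙_ A))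
      = dayMk F (yoneda.obj (𝟙_ A)) c' c.unop (𝟙_ A) (w.unop ≫ (ρ_ c.unop).inv) x (𝟙 (𝟙_ A))
    rw [day_rel_left w.unop]
    exact dayMk_congr (by simp)

/-- The right unitor for Day convolution. -/
def runitIso (F : Aᵒᵖ ⥤ Type u) : DayObj F (yoneda.obj (𝟙_ A)) ≅ F where
  hom := runitHom F
  inv := runitInv F
  hom_inv_id := by
    ext c z
    induction z using Quot.ind with
    | _ p =>
      obtain ⟨a, b, h, x, y⟩ := p
      show dayMk F (yoneda.obj (𝟙_ A)) c c.unop (𝟙_ A) (ρ_ c.unop).inv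
          (F.map (h ≫ a ◁ y ≫ (ρ_ a).hom).op x) (𝟙 (𝟙_ A))
        = dayMk F (yoneda.obj (𝟙_ A)) c a b h x y
      rw [day_rel_left (h ≫ a ◁ y ≫ (ρ_ a).hom)]
      have e1 : dayMk F (yoneda.obj (𝟙_ A)) c a b h x y
          = dayMk F (yoneda.obj (𝟙_ A)) c a b h x
            ((yoneda.obj (𝟙_ A)).map y.op (𝟙 (𝟙_ A))) := by
        apply congrArg (fun t => dayMk F (yoneda.obj (𝟙_ A)) c a b h x t)
        simp
      rw [e1, day_rel_right y]
      exact dayMk_congr (by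
        simp only [← rightUnitor_inv_naturality_assoc, ← rightUnitor_inv_naturality]
        simp [← whisker_exchange])
  inv_hom_id := by
    ext c x
    show F.map ((ρ_ c.unop).inv ≫ c.unop ◁ (𝟙 (𝟙_ A)) ≫ (ρ_ c.unop).hom).op x = x
    simp
/-- The Day convolution monoidal structure (data part). -/
def dayStruct : MonoidalCategoryStruct (Aᵒᵖ ⥤ Type u) where
  tensorObj := DayObj
  whiskerLeft X _ _ f := dayHom (𝟙 X) f
  whiskerRight f Y := dayHom f (𝟙 Y)
  tensorHom := dayHom
  tensorUnit := yoneda.obj (𝟙_ A)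
  associator := assocIso
  leftUnitor := lunitIso
  rightUnitor := runitIso

/-- The Day convolution monoidal category structure on presheaves. -/
def dayMonoidal : MonoidalCategory (Aᵒᵖ ⥤ Type u) := by
  letI : MonoidalCategoryStruct (Aᵒᵖ ⥤ Type u) := dayStruct
  refine MonoidalCategory.ofTensorHom ?_ ?_ ?_ ?_ ?_ ?_ ?_ ?_ ?_
  · -- tensor_id
    intro F G
    ext c z
    induction z using Quot.ind with
    | _ p => rfl
  · -- id_tensorHom
    intro X Y₁ Y₂ f
    rfl
  · -- tensorHom_id
    intro X₁ X₂ f Y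
    rfl
  · -- tensor_comp
    intro X₁ Y₁ Z₁ X₂ Y₂ Z₂ f₁ f₂ g₁ g₂
    ext c z
    induction z using Quot.ind with
    | _ p => rfl
  · -- associator_naturality
    intro X₁ X₂ X₃ Y₁ Y₂ Y₃ f₁ f₂ f₃
    ext c z
    induction z using Quot.ind with
    | _ p =>
      obtain ⟨e, d, h, X, w⟩ := p
      induction X using Quot.ind with
      | _ q =>
        obtain ⟨s, t, k, xs, yt⟩ := q
        rfl
  · -- leftUnitor_naturality
    intro X Y f
    ext c z
    induction z using Quot.ind with
    | _ p =>
      obtain ⟨a, b, h, x, y⟩ := p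
      show Y.map (h ≫ x ▷ b ≫ (λ_ b).hom).op (f.app (op b) y)
        = f.app c (X.map (h ≫ x ▷ b ≫ (λ_ b).hom).op y)
      exact (FunctorToTypes.naturality f _ y).symm
  · -- rightUnitor_naturality
    intro X Y f
    ext c z
    induction z using Quot.ind with
    | _ p =>
      obtain ⟨a, b, h, x, y⟩ := p
      show Y.map (h ≫ a ◁ y ≫ (ρ_ a).hom).op (f.app (op a) x)
        = f.app c (X.map (h ≫ a ◁ y ≫ (ρ_ a).hom).op x)
      exact (FunctorToTypes.naturality f _ x).symm
  · -- pentagon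
    intro F G H K
    ext c z
    induction z using Quot.ind with
    | _ p =>
      obtain ⟨e₂, d, h₃, X₂, w⟩ := p
      induction X₂ using Quot.ind with
      | _ q₂ =>
        obtain ⟨e₁, cp, h₂, X₁, z'⟩ := q₂
        induction X₁ using Quot.ind with
        | _ q₁ =>
          obtain ⟨a, b, h₁, x, y⟩ := q₁
          show dayMk F (DayObj G (DayObj H K)) c a ((b ⊗ cp) ⊗ d)
              (h₃ ≫ (h₂ ≫ h₁ ▷ cp ≫ (α_ a b cp).hom) ▷ d ≫ (α_ a (b ⊗ cp) d).hom) x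
              (dayMk G (DayObj H K) (op ((b ⊗ cp) ⊗ d)) b (cp ⊗ d)
                (𝟙 ((b ⊗ cp) ⊗ d) ≫ 𝟙 (b ⊗ cp) ▷ d ≫ (α_ b cp d).hom) y
                (dayMk H K (op (cp ⊗ d)) cp d (𝟙 _) z' w))
            = dayMk F (DayObj G (DayObj H K)) c a (b ⊗ (cp ⊗ d))
              ((h₃ ≫ h₂ ▷ d ≫ (α_ e₁ cp d).hom) ≫ h₁ ▷ (cp ⊗ d) ≫ (α_ a b (cp ⊗ d)).hom) x
              (dayMk G (DayObj H K) (op (b ⊗ (cp ⊗ d))) b (cp ⊗ d) (𝟙 _) y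
                (dayMk H K (op (cp ⊗ d)) cp d (𝟙 _) z' w))
          have e1 : dayMk G (DayObj H K) (op ((b ⊗ cp) ⊗ d)) b (cp ⊗ d)
                (𝟙 ((b ⊗ cp) ⊗ d) ≫ 𝟙 (b ⊗ cp) ▷ d ≫ (α_ b cp d).hom) y
                (dayMk H K (op (cp ⊗ d)) cp d (𝟙 _) z' w)
              = (DayObj G (DayObj H K)).map ((α_ b cp d).hom).op
                (dayMk G (DayObj H K) (op (b ⊗ (cp ⊗ d))) b (cp ⊗ d) (𝟙 _) y
                  (dayMk H K (op (cp ⊗ d)) cp d (𝟙 _) z' w)) := by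
            rw [dayObj_map_mk]
            exact dayMk_congr (by simp)
          rw [e1]
          have e2 := day_rel (F := F) (G := DayObj G (DayObj H K)) (𝟙 a) ((α_ b cp d).hom)
            (h₃ ≫ (h₂ ≫ h₁ ▷ cp ≫ (α_ a b cp).hom) ▷ d ≫ (α_ a (b ⊗ cp) d).hom) x
            (dayMk G (DayObj H K) (op (b ⊗ (cp ⊗ d))) b (cp ⊗ d) (𝟙 _) y
              (dayMk H K (op (cp ⊗ d)) cp d (𝟙 _) z' w))
          simp only [op_id, FunctorToTypes.map_id_apply] at e2
          rw [e2]
          exact dayMk_congr (by simp [MonoidalCategory.tensorHom_def, whisker_exchange, pentagon])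
  · -- triangle
    intro F G
    ext c z
    induction z using Quot.ind with
    | _ p =>
      obtain ⟨e, d, h₂, X₁, w⟩ := p
      induction X₁ using Quot.ind with
      | _ q =>
        obtain ⟨a, b, h₁, x, t⟩ := q
        change b ⟶ 𝟙_ A at t
        show dayMk F G c a (b ⊗ d) (h₂ ≫ h₁ ▷ d ≫ (α_ a b d).hom) x
            (G.map (𝟙 (b ⊗ d) ≫ t ▷ d ≫ (λ_ d).hom).op w)
          = dayMk F G c e d h₂ (F.map (h₁ ≫ a ◁ t ≫ (ρ_ a).hom).op x) w
        rw [day_rel_right (𝟙 (b ⊗ d) ≫ t ▷ d ≫ (λ_ d).hom), day_rel_left (h₁ ≫ a ◁ t ≫ (ρ_ a).hom)]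
        exact dayMk_congr (by simp [MonoidalCategory.tensorHom_def, whisker_exchange])

/-- The multiplication isomorphism for the Yoneda embedding. -/
def yonedaMu (a b : A) : DayObj (yoneda.obj a) (yoneda.obj b) ≅ yoneda.obj (a ⊗ b) where
  hom :=
    { app := fun c => TypeCat.ofHom (Quot.lift (fun (p : Pt (yoneda.obj a) (yoneda.obj b) c) => p.h ≫ (p.x ⊗ₘ p.y))
        (by
          rintro p q r
          cases r with
          | @mk s s' t t' u v h x y =>
            show h ≫ ((u ≫ x) ⊗ₘ (v ≫ y)) = (h ≫ (u ⊗ₘ v)) ≫ (x ⊗ₘ y)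
            simp [tensorHom_comp_tensorHom]))
      naturality := fun c c' w => by
        ext z
        induction z using Quot.ind with
        | _ p =>
          show (w.unop ≫ p.h) ≫ (p.x ⊗ₘ p.y) = w.unop ≫ (p.h ≫ (p.x ⊗ₘ p.y))
          simp }
  inv :=
    { app := fun c => TypeCat.ofHom fun k => dayMk (yoneda.obj a) (yoneda.obj b) c a b k (𝟙 a) (𝟙 b)
      naturality := fun c c' w => by
        ext k
        rfl }
  hom_inv_id := by
    ext c z
    induction z using Quot.ind with
    | _ p =>
      obtain ⟨s, t, h, f, g⟩ := p
      show dayMk (yoneda.obj a) (yoneda.obj b) c a b (h ≫ (f ⊗ₘ g)) (𝟙 a) (𝟙 b)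
        = dayMk (yoneda.obj a) (yoneda.obj b) c s t h f g
      have e := day_rel (F := yoneda.obj a) (G := yoneda.obj b) f g h (𝟙 a) (𝟙 b)
      rw [← e]
      simp
  inv_hom_id := by
    ext c k
    show k ≫ (𝟙 a ⊗ₘ 𝟙 b) = k
    simp

/-- The Yoneda embedding is monoidal for the Day convolution structure. -/
def yonedaCore : letI := (dayMonoidal (A := A)); Functor.CoreMonoidal (yoneda (C := A)) := by
  letI := (dayMonoidal (A := A))
  refine
    { εIso := Iso.refl _
      μIso := fun a b => yonedaMu a b
      μIso_hom_natural_left := ?_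
      μIso_hom_natural_right := ?_
      associativity := ?_
      left_unitality := ?_
      right_unitality := ?_ }
  · intro X Y f X'
    ext c z
    induction z using Quot.ind with
    | _ p =>
      obtain ⟨s, t, h, g₁, g₂⟩ := p
      show h ≫ ((g₁ ≫ f) ⊗ₘ g₂) = (h ≫ (g₁ ⊗ₘ g₂)) ≫ f ▷ X'
      simp [MonoidalCategory.tensorHom_def, whisker_exchange]
  · intro X Y X' f
    ext c z
    induction z using Quot.ind with
    | _ p =>
      obtain ⟨s, t, h, g₁, g₂⟩ := p
      show h ≫ (g₁ ⊗ₘ (g₂ ≫ f)) = (h ≫ (g₁ ⊗ₘ g₂)) ≫ X' ◁ f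
      simp [MonoidalCategory.tensorHom_def, whisker_exchange]
  · intro X Y Z
    ext c z
    induction z using Quot.ind with
    | _ p =>
      obtain ⟨e, d, h₂, X₁, g₃⟩ := p
      induction X₁ using Quot.ind with
      | _ q =>
        obtain ⟨s, t, h₁, g₁, g₂⟩ := q
        show (h₂ ≫ ((h₁ ≫ (g₁ ⊗ₘ g₂)) ⊗ₘ g₃)) ≫ (α_ X Y Z).hom
          = (h₂ ≫ h₁ ▷ d ≫ (α_ s t d).hom) ≫ (g₁ ⊗ₘ (𝟙 (t ⊗ d) ≫ (g₂ ⊗ₘ g₃)))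
        simp [MonoidalCategory.tensorHom_def, whisker_exchange]
  · intro X
    ext c z
    induction z using Quot.ind with
    | _ p =>
      obtain ⟨s, t, h, f, g⟩ := p
      change s ⟶ 𝟙_ A at f; change t ⟶ X at g
      show (h ≫ f ▷ t ≫ (λ_ t).hom) ≫ g = (h ≫ (f ⊗ₘ g)) ≫ (λ_ X).hom
      simp [MonoidalCategory.tensorHom_def, whisker_exchange]
  · intro X
    ext c z
    induction z using Quot.ind with
    | _ p =>
      obtain ⟨s, t, h, g, f⟩ := p
      change t ⟶ 𝟙_ A at f; change s ⟶ X at g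
      show (h ≫ s ◁ f ≫ (ρ_ s).hom) ≫ g = (h ≫ (g ⊗ₘ f)) ≫ (ρ_ X).hom
      simp only [MonoidalCategory.tensorHom_def, Category.assoc, ← rightUnitor_naturality,
        ← whisker_exchange_assoc]

end Aux

/-- The Day convolution monoidal structure on the presheaf category of a small monoidal
category makes the Yoneda embedding a strong monoidal functor: there is a monoidal
structure whose tensor is the Day convolution and whose unit is `y(𝟙_A)`, for which
`yoneda` carries a (strong) monoidal functor structure; in particular there are coherent
natural isomorphisms `y a ⊛ y b ≅ y (a ⊗ b)` and `𝟙_Day ≅ y (𝟙_A)`. -/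
theorem yoneda_strong_monoidal_for_day_convolution :
    ∃ instM : MonoidalCategory (Aᵒᵖ ⥤ Type u),
      (∀ F G : Aᵒᵖ ⥤ Type u, @MonoidalCategory.tensorObj _ _ instM.toMonoidalCategoryStruct F G = DayObj F G) ∧
      (@MonoidalCategory.tensorUnit _ _ instM.toMonoidalCategoryStruct = yoneda.obj (𝟙_ A)) ∧
      Nonempty (@Functor.Monoidal A _ _ (Aᵒᵖ ⥤ Type u) _ instM yoneda) := by
  refine ⟨dayMonoidal, fun F G => rfl, rfl, ?_⟩
  letI := (dayMonoidal (A := A))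
  exact ⟨Functor.CoreMonoidal.toMonoidal yonedaCore⟩

end DayConv
end

section
/- Given a Kleisli structure P on a subcategory inclusion A ↪ K of bicategories (with units y_a : a ⟶ P a, extension functors (-)^♯ : K(a, P b) ⥤ K(P a, P b), and coherent invertible 2-cells η_f : f ⟶ f^♯ ∘ y_a, κ_a : (y_a)^♯ ⟶ id_{P a}, κ_{g,f} : (g^♯ ∘ f)^♯ ⟶ g^♯ ∘ f^♯), the data with objects those of A, hom-categories Kl(P)(a,b) := K(a, P b), identities y_a, and composition g · f := g^♯ ∘ f forms a bicategory (i.e., the induced unitors and associator derived from η, κ satisfy the pentagon and triangle coherence axioms). -/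
open CategoryTheory Bicategory

universe w v u u₂

/-- A Kleisli structure `P` on a (sub-bi)category of objects `ι : J → K` of a bicategory
`K`: units `y a : ι a ⟶ P a`, extension functors `(-)^♯ : K(ι a, P b) ⥤ K(P a, P b)`,
and coherent natural invertible 2-cells
`η_f : f ≅ f^♯ ∘ y_a`, `κ_a : (y_a)^♯ ≅ 𝟙 (P a)`, `κ_{g,f} : (g^♯ ∘ f)^♯ ≅ g^♯ ∘ f^♯`,
subject to unit and pentagon coherence conditions. -/
structure KleisliStructure (K : Type u) [Bicategory.{w, v} K] (J : Type u₂)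
    (ι : J → K) where
  P : J → K
  y : ∀ a : J, ι a ⟶ P a
  sharp : ∀ {a b : J}, (ι a ⟶ P b) ⥤ (P a ⟶ P b)
  eta : ∀ {a b : J} (f : ι a ⟶ P b), f ≅ y a ≫ sharp.obj f
  kapId : ∀ a : J, sharp.obj (y a) ≅ 𝟙 (P a)
  kap : ∀ {a b c : J} (f : ι a ⟶ P b) (g : ι b ⟶ P c),
    sharp.obj (f ≫ sharp.obj g) ≅ sharp.obj f ≫ sharp.obj g
  /-- naturality of `η` -/
  eta_natural : ∀ {a b : J} {f f' : ι a ⟶ P b} (θ : f ⟶ f'),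
    θ ≫ (eta f').hom = (eta f).hom ≫ y a ◁ sharp.map θ
  /-- naturality of `κ` in the first variable -/
  kap_natural_left : ∀ {a b c : J} {f f' : ι a ⟶ P b} (θ : f ⟶ f') (g : ι b ⟶ P c),
    sharp.map (θ ▷ sharp.obj g) ≫ (kap f' g).hom
      = (kap f g).hom ≫ sharp.map θ ▷ sharp.obj g
  /-- naturality of `κ` in the second variable -/
  kap_natural_right : ∀ {a b c : J} (f : ι a ⟶ P b) {g g' : ι b ⟶ P c} (δ : g ⟶ g'),
    sharp.map (f ◁ sharp.map δ) ≫ (kap f g').hom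
      = (kap f g).hom ≫ sharp.obj f ◁ sharp.map δ
  /-- unit coherence -/
  unit_coh : ∀ {a b : J} (f : ι a ⟶ P b),
    sharp.map (eta f).hom ≫ (kap (y a) f).hom ≫ (kapId a).hom ▷ sharp.obj f
      ≫ (λ_ (sharp.obj f)).hom = 𝟙 (sharp.obj f)
  /-- pentagon coherence -/
  pentagon_coh : ∀ {a b c d : J} (f : ι a ⟶ P b) (g : ι b ⟶ P c) (h : ι c ⟶ P d),
    (kap (f ≫ sharp.obj g) h).hom ≫ (kap f g).hom ▷ sharp.obj h
      = sharp.map ((α_ f (sharp.obj g) (sharp.obj h)).hom ≫ f ◁ (kap g h).inv)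
          ≫ (kap f (g ≫ sharp.obj h)).hom ≫ sharp.obj f ◁ (kap g h).hom
          ≫ (α_ (sharp.obj f) (sharp.obj g) (sharp.obj h)).inv

/-- Given a Kleisli structure `P` on `ι : J → K`, the data with objects `J`,
hom-categories `Kl(P)(a,b) = K(ι a, P b)`, identities `y a` and composition
`g · f = f ≫ g^♯`, equipped with the unitors and associator derived from `η` and `κ`,
satisfies the pentagon and triangle coherence axioms of a bicategory. -/
theorem kleisli_structure_gives_bicategory {K : Type u} [Bicategory.{w, v} K]
    {J : Type u₂} {ι : J → K} (S : KleisliStructure K J ι) :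
    -- Kleisli composition and whiskerings
    let kcomp : ∀ {a b c : J}, (ι a ⟶ S.P b) → (ι b ⟶ S.P c) → (ι a ⟶ S.P c) :=
      fun f g => f ≫ S.sharp.obj g
    let kwhiskR : ∀ {a b c : J} {f f' : ι a ⟶ S.P b} (_ : f ⟶ f') (g : ι b ⟶ S.P c),
        kcomp f g ⟶ kcomp f' g :=
      fun {a b c f f'} θ g => θ ▷ S.sharp.obj g
    let kwhiskL : ∀ {a b c : J} (f : ι a ⟶ S.P b) {g g' : ι b ⟶ S.P c} (_ : g ⟶ g'),
        kcomp f g ⟶ kcomp f g' :=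
      fun {a b c} f {g g'} δ => f ◁ S.sharp.map δ
    -- the associator and unitors of the Kleisli bicategory
    let kassoc : ∀ {a b c d : J} (f : ι a ⟶ S.P b) (g : ι b ⟶ S.P c) (h : ι c ⟶ S.P d),
        kcomp (kcomp f g) h ⟶ kcomp f (kcomp g h) :=
      fun f g h => (α_ f (S.sharp.obj g) (S.sharp.obj h)).hom ≫ f ◁ (S.kap g h).inv
    let klam : ∀ {a b : J} (f : ι a ⟶ S.P b), kcomp (S.y a) f ⟶ f :=
      fun f => (S.eta f).inv
    let krho : ∀ {a b : J} (f : ι a ⟶ S.P b), kcomp f (S.y b) ⟶ f :=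
      fun {a b} f => f ◁ (S.kapId b).hom ≫ (ρ_ f).hom
    -- pentagon axiom
    (∀ {a b c d e : J} (f : ι a ⟶ S.P b) (g : ι b ⟶ S.P c) (h : ι c ⟶ S.P d)
        (i : ι d ⟶ S.P e),
      kwhiskR (kassoc f g h) i ≫ kassoc f (kcomp g h) i ≫ kwhiskL f (kassoc g h i)
        = kassoc (kcomp f g) h i ≫ kassoc f g (kcomp h i)) ∧
    -- triangle axiom
    (∀ {a b c : J} (f : ι a ⟶ S.P b) (g : ι b ⟶ S.P c),
      kassoc f (S.y b) g ≫ kwhiskL f (klam g) = kwhiskR (krho f) g) := by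
  intro kcomp kwhiskR kwhiskL kassoc klam krho
  constructor
  · intro a b c d e f g h i
    dsimp only [kcomp, kwhiskR, kwhiskL, kassoc]
    have hp : S.sharp.map ((α_ g (S.sharp.obj h) (S.sharp.obj i)).hom ≫ g ◁ (S.kap h i).inv)
        = (S.kap (g ≫ S.sharp.obj h) i).hom ≫ (S.kap g h).hom ▷ S.sharp.obj i
          ≫ (α_ (S.sharp.obj g) (S.sharp.obj h) (S.sharp.obj i)).hom
          ≫ S.sharp.obj g ◁ (S.kap h i).inv ≫ (S.kap g (h ≫ S.sharp.obj i)).inv := by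
      have := S.pentagon_coh g h i
      rw [← cancel_mono (S.kap g (h ≫ S.sharp.obj i)).hom]
      simp only [Category.assoc, Iso.inv_hom_id, Category.comp_id]
      rw [← cancel_mono (S.sharp.obj g ◁ (S.kap h i).hom)]
      simp only [Category.assoc, whiskerLeft_inv_hom, Category.comp_id]
      rw [← cancel_mono (α_ (S.sharp.obj g) (S.sharp.obj h) (S.sharp.obj i)).inv]
      simp only [Category.assoc, Iso.hom_inv_id, Category.comp_id]
      exact this.symm
    rw [hp]
    simp only [Bicategory.whiskerLeft_comp, comp_whiskerRight, Category.assoc,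
      whiskerLeft_inv_hom_assoc]
    rw [associator_naturality_middle_assoc]
    simp only [← Bicategory.whiskerLeft_comp_assoc, inv_hom_whiskerRight_assoc,
      inv_hom_whiskerRight, Bicategory.whiskerLeft_id, Category.id_comp]
    simp only [Bicategory.whiskerLeft_comp, Category.assoc]
    rw [pentagon_assoc, associator_naturality_right_assoc]
  · intro a b c f g
    dsimp only [kcomp, kwhiskR, kwhiskL, kassoc, klam, krho]
    have hu : S.sharp.map (S.eta g).inv
        = (S.kap (S.y b) g).hom ≫ (S.kapId b).hom ▷ S.sharp.obj g
          ≫ (λ_ (S.sharp.obj g)).hom := by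
      rw [← cancel_epi (S.sharp.map (S.eta g).hom), ← S.sharp.map_comp, Iso.hom_inv_id,
        S.sharp.map_id]
      simpa using (S.unit_coh g).symm
    rw [hu]
    simp only [Bicategory.whiskerLeft_comp, Category.assoc, whiskerLeft_inv_hom_assoc]
    rw [← associator_naturality_middle_assoc, Bicategory.triangle]
    simp [comp_whiskerRight]
end

section
/- A Kleisli structure P on A ↪ K underlies a pseudofunctor P : A ⥤ K: defining P f := (y_b ∘ f)^♯ on 1-cells, there are coherent invertible 2-cells P(id_a) ≅ id_{P a} and P g ∘ P f ≅ P(g ∘ f) (built from κ_a, κ_{g,f}, and η) satisfying the pseudofunctor coherence axioms. -/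
open CategoryTheory Bicategory

universe w v u u₂

theorem cancel_wr {B : Type*} [Bicategory B] {x y : B} {g h : x ⟶ y} {s : y ⟶ y}
    (e : s ≅ 𝟙 y) {φ ψ : g ⟶ h} (H : φ ▷ s = ψ ▷ s) : φ = ψ := by
  have key : ∀ χ : g ⟶ h,
      (ρ_ g).inv ≫ g ◁ e.inv ≫ χ ▷ s ≫ h ◁ e.hom ≫ (ρ_ h).hom = χ := by
    intro χ
    have := whisker_exchange χ e.hom
    rw [reassoc_of% this.symm]
    simp [← Bicategory.whiskerLeft_comp]
  rw [← key φ, ← key ψ, H]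

namespace KleisliStructure
variable {K : Type u} [Bicategory.{w, v} K] {J : Type u₂} {ι : J → K}
  (S : KleisliStructure K J ι)

theorem recon {a b : J} {r w : ι a ⟶ S.P b} (φ : w ⟶ S.y a ≫ S.sharp.obj r) :
    (S.eta w).hom ≫ S.y a ◁ (S.sharp.map φ ≫ (S.kap (S.y a) r).hom ≫
      (S.kapId a).hom ▷ S.sharp.obj r ≫ (λ_ (S.sharp.obj r)).hom) = φ := by
  have I1 : ∀ {w' : ι a ⟶ S.P b} (φ' : w' ⟶ S.y a ≫ S.sharp.obj r),
      (S.eta w').hom ≫ S.y a ◁ (S.sharp.map φ' ≫ (S.kap (S.y a) r).hom ≫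
        (S.kapId a).hom ▷ S.sharp.obj r ≫ (λ_ (S.sharp.obj r)).hom)
      = φ' ≫ (S.eta (S.y a ≫ S.sharp.obj r)).hom ≫ S.y a ◁ ((S.kap (S.y a) r).hom ≫
        (S.kapId a).hom ▷ S.sharp.obj r ≫ (λ_ (S.sharp.obj r)).hom) := by
    intro w' φ'
    rw [Bicategory.whiskerLeft_comp, ← Category.assoc, ← S.eta_natural φ', Category.assoc]
  have N : (S.eta (S.y a ≫ S.sharp.obj r)).hom ≫ S.y a ◁ ((S.kap (S.y a) r).hom ≫
        (S.kapId a).hom ▷ S.sharp.obj r ≫ (λ_ (S.sharp.obj r)).hom) = 𝟙 _ := by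
    have h := I1 (S.eta r).hom
    rw [S.unit_coh r, Bicategory.whiskerLeft_id, Category.comp_id] at h
    exact (cancel_epi (S.eta r).hom).mp (by rw [← h, Category.comp_id])
  rw [I1 φ, N, Category.comp_id]


theorem eta_comp {a b c : J} (p : ι a ⟶ S.P b) (q : ι b ⟶ S.P c) :
    (S.eta (p ≫ S.sharp.obj q)).hom
      = (S.eta p).hom ▷ S.sharp.obj q ≫ (α_ (S.y a) (S.sharp.obj p) (S.sharp.obj q)).hom
        ≫ S.y a ◁ (S.kap p q).inv := by
  have pent : S.sharp.map ((α_ (S.y a) (S.sharp.obj p) (S.sharp.obj q)).hom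
        ≫ S.y a ◁ (S.kap p q).inv) ≫ (S.kap (S.y a) (p ≫ S.sharp.obj q)).hom
      = (S.kap (S.y a ≫ S.sharp.obj p) q).hom ≫ (S.kap (S.y a) p).hom ▷ S.sharp.obj q
        ≫ (α_ (S.sharp.obj (S.y a)) (S.sharp.obj p) (S.sharp.obj q)).hom
        ≫ S.sharp.obj (S.y a) ◁ (S.kap p q).inv := by
    rw [← Category.assoc, S.pentagon_coh (S.y a) p q]
    simp
  have ex := whisker_exchange (S.kapId a).hom (S.kap p q).inv
  have tail : (α_ (S.sharp.obj (S.y a)) (S.sharp.obj p) (S.sharp.obj q)).hom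
        ≫ S.sharp.obj (S.y a) ◁ (S.kap p q).inv
        ≫ (S.kapId a).hom ▷ S.sharp.obj (p ≫ S.sharp.obj q)
        ≫ (λ_ (S.sharp.obj (p ≫ S.sharp.obj q))).hom
      = ((S.kapId a).hom ▷ S.sharp.obj p ≫ (λ_ (S.sharp.obj p)).hom) ▷ S.sharp.obj q
        ≫ (S.kap p q).inv := by
    rw [reassoc_of% ex, leftUnitor_naturality, ← Category.assoc, ← Category.assoc]
    congr 1
    rw [Category.assoc]
    bicategory
  have key : S.sharp.map ((S.eta p).hom ▷ S.sharp.obj q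
        ≫ (α_ (S.y a) (S.sharp.obj p) (S.sharp.obj q)).hom ≫ S.y a ◁ (S.kap p q).inv)
      ≫ (S.kap (S.y a) (p ≫ S.sharp.obj q)).hom
      ≫ (S.kapId a).hom ▷ S.sharp.obj (p ≫ S.sharp.obj q)
      ≫ (λ_ (S.sharp.obj (p ≫ S.sharp.obj q))).hom = 𝟙 _ := by
    rw [Functor.map_comp, Category.assoc, reassoc_of% pent,
      reassoc_of% (S.kap_natural_left (S.eta p).hom q), tail]
    slice_lhs 2 4 => rw [← Bicategory.comp_whiskerRight, ← Bicategory.comp_whiskerRight,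
      S.unit_coh p]
    simp
  have h := S.recon (r := p ≫ S.sharp.obj q) ((S.eta p).hom ▷ S.sharp.obj q
    ≫ (α_ (S.y a) (S.sharp.obj p) (S.sharp.obj q)).hom ≫ S.y a ◁ (S.kap p q).inv)
  rw [key, Bicategory.whiskerLeft_id, Category.comp_id] at h
  exact h

theorem eta_id (a : J) :
    (S.eta (S.y a)).hom = (ρ_ (S.y a)).inv ≫ S.y a ◁ (S.kapId a).inv := by
  have h1 : (S.eta (S.y a ≫ S.sharp.obj (S.y a))).hom
      = S.y a ◁ S.sharp.map (S.eta (S.y a)).hom :=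
    (cancel_epi (S.eta (S.y a)).hom).mp (S.eta_natural (S.eta (S.y a)).hom)
  have h2 := S.eta_comp (S.y a) (S.y a)
  have eqA : S.y a ◁ S.sharp.map (S.eta (S.y a)).hom
      = (S.eta (S.y a)).hom ▷ S.sharp.obj (S.y a)
        ≫ (α_ (S.y a) (S.sharp.obj (S.y a)) (S.sharp.obj (S.y a))).hom
        ≫ S.y a ◁ (S.kap (S.y a) (S.y a)).inv := h1.symm.trans h2
  have h3 : S.sharp.map (S.eta (S.y a)).hom ≫ (S.kap (S.y a) (S.y a)).hom
      = (λ_ (S.sharp.obj (S.y a))).inv ≫ (S.kapId a).inv ▷ S.sharp.obj (S.y a) := by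
    rw [← cancel_mono ((S.kapId a).hom ▷ S.sharp.obj (S.y a)
      ≫ (λ_ (S.sharp.obj (S.y a))).hom)]
    simp only [Category.assoc, Iso.inv_hom_id_assoc, inv_hom_whiskerRight_assoc,
      Iso.inv_hom_id, Category.comp_id]
    exact S.unit_coh (S.y a)
  have h4 : (S.eta (S.y a)).hom ▷ S.sharp.obj (S.y a)
      = ((ρ_ (S.y a)).inv ≫ S.y a ◁ (S.kapId a).inv) ▷ S.sharp.obj (S.y a) := by
    calc (S.eta (S.y a)).hom ▷ S.sharp.obj (S.y a)
        = ((S.eta (S.y a)).hom ▷ S.sharp.obj (S.y a)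
            ≫ (α_ (S.y a) (S.sharp.obj (S.y a)) (S.sharp.obj (S.y a))).hom
            ≫ S.y a ◁ (S.kap (S.y a) (S.y a)).inv)
          ≫ S.y a ◁ (S.kap (S.y a) (S.y a)).hom
          ≫ (α_ (S.y a) (S.sharp.obj (S.y a)) (S.sharp.obj (S.y a))).inv := by simp
      _ = S.y a ◁ S.sharp.map (S.eta (S.y a)).hom
          ≫ S.y a ◁ (S.kap (S.y a) (S.y a)).hom
          ≫ (α_ (S.y a) (S.sharp.obj (S.y a)) (S.sharp.obj (S.y a))).inv := by rw [← eqA]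
      _ = S.y a ◁ (S.sharp.map (S.eta (S.y a)).hom ≫ (S.kap (S.y a) (S.y a)).hom)
          ≫ (α_ (S.y a) (S.sharp.obj (S.y a)) (S.sharp.obj (S.y a))).inv := by
            rw [Bicategory.whiskerLeft_comp, Category.assoc]
      _ = S.y a ◁ ((λ_ (S.sharp.obj (S.y a))).inv ≫ (S.kapId a).inv ▷ S.sharp.obj (S.y a))
          ≫ (α_ (S.y a) (S.sharp.obj (S.y a)) (S.sharp.obj (S.y a))).inv := by rw [h3]
      _ = ((ρ_ (S.y a)).inv ≫ S.y a ◁ (S.kapId a).inv) ▷ S.sharp.obj (S.y a) := by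
            bicategory
  exact cancel_wr (S.kapId a) h4

theorem sharp_eta_kap (b : J) :
    S.sharp.map (S.eta (S.y b)).hom ≫ (S.kap (S.y b) (S.y b)).hom
      = (λ_ (S.sharp.obj (S.y b))).inv ≫ (S.kapId b).inv ▷ S.sharp.obj (S.y b) := by
  rw [← cancel_mono ((S.kapId b).hom ▷ S.sharp.obj (S.y b)
    ≫ (λ_ (S.sharp.obj (S.y b))).hom)]
  simp only [Category.assoc, Iso.inv_hom_id_assoc, inv_hom_whiskerRight_assoc,
    Iso.inv_hom_id, Category.comp_id]
  exact S.unit_coh (S.y b)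

theorem kap_right_unit {a b : J} (f : ι a ⟶ S.P b) :
    S.sharp.map ((ρ_ f).inv ≫ f ◁ (S.kapId b).inv) ≫ (S.kap f (S.y b)).hom
      = (ρ_ (S.sharp.obj f)).inv ≫ S.sharp.obj f ◁ (S.kapId b).inv := by
  have pent : (S.kap f (S.y b ≫ (S.sharp.obj (S.y b)))).hom ≫ S.sharp.obj f ◁ (S.kap (S.y b) (S.y b)).hom
      = S.sharp.map (f ◁ (S.kap (S.y b) (S.y b)).hom ≫ (α_ f (S.sharp.obj (S.y b)) (S.sharp.obj (S.y b))).inv)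
        ≫ (S.kap (f ≫ (S.sharp.obj (S.y b))) (S.y b)).hom ≫ (S.kap f (S.y b)).hom ▷ (S.sharp.obj (S.y b))
        ≫ (α_ (S.sharp.obj f) (S.sharp.obj (S.y b)) (S.sharp.obj (S.y b))).hom := by
    rw [reassoc_of% (S.pentagon_coh f (S.y b) (S.y b))]
    slice_rhs 1 2 => rw [← Functor.map_comp]
    simp
  have coh1 : f ◁ ((λ_ (S.sharp.obj (S.y b))).inv ≫ (S.kapId b).inv ▷ (S.sharp.obj (S.y b))) ≫ (α_ f (S.sharp.obj (S.y b)) (S.sharp.obj (S.y b))).inv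
      = ((ρ_ f).inv ≫ f ◁ (S.kapId b).inv) ▷ (S.sharp.obj (S.y b)) := by
    bicategory
  have coh2 : S.sharp.obj f ◁ ((λ_ (S.sharp.obj (S.y b))).inv ≫ (S.kapId b).inv ▷ (S.sharp.obj (S.y b)))
      = ((ρ_ (S.sharp.obj f)).inv ≫ S.sharp.obj f ◁ (S.kapId b).inv) ▷ (S.sharp.obj (S.y b))
        ≫ (α_ (S.sharp.obj f) (S.sharp.obj (S.y b)) (S.sharp.obj (S.y b))).hom := by
    bicategory
  have h2 := S.kap_natural_right f (S.eta (S.y b)).hom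
  have h5 : (S.sharp.map ((ρ_ f).inv ≫ f ◁ (S.kapId b).inv) ≫ (S.kap f (S.y b)).hom) ▷ (S.sharp.obj (S.y b))
      = ((ρ_ (S.sharp.obj f)).inv ≫ S.sharp.obj f ◁ (S.kapId b).inv) ▷ (S.sharp.obj (S.y b)) := by
    rw [← cancel_mono (α_ (S.sharp.obj f) (S.sharp.obj (S.y b)) (S.sharp.obj (S.y b))).hom, ← cancel_epi (S.kap f (S.y b)).hom]
    calc (S.kap f (S.y b)).hom
          ≫ (S.sharp.map ((ρ_ f).inv ≫ f ◁ (S.kapId b).inv) ≫ (S.kap f (S.y b)).hom) ▷ (S.sharp.obj (S.y b))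
          ≫ (α_ (S.sharp.obj f) (S.sharp.obj (S.y b)) (S.sharp.obj (S.y b))).hom
        = S.sharp.map (((ρ_ f).inv ≫ f ◁ (S.kapId b).inv) ▷ (S.sharp.obj (S.y b)))
          ≫ (S.kap (f ≫ (S.sharp.obj (S.y b))) (S.y b)).hom ≫ (S.kap f (S.y b)).hom ▷ (S.sharp.obj (S.y b))
          ≫ (α_ (S.sharp.obj f) (S.sharp.obj (S.y b)) (S.sharp.obj (S.y b))).hom := by
          rw [comp_whiskerRight, Category.assoc, ← reassoc_of% (S.kap_natural_left
            ((ρ_ f).inv ≫ f ◁ (S.kapId b).inv) (S.y b))]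
      _ = S.sharp.map ((f ◁ ((λ_ (S.sharp.obj (S.y b))).inv ≫ (S.kapId b).inv ▷ (S.sharp.obj (S.y b)))) ≫ (α_ f (S.sharp.obj (S.y b)) (S.sharp.obj (S.y b))).inv)
          ≫ (S.kap (f ≫ (S.sharp.obj (S.y b))) (S.y b)).hom ≫ (S.kap f (S.y b)).hom ▷ (S.sharp.obj (S.y b))
          ≫ (α_ (S.sharp.obj f) (S.sharp.obj (S.y b)) (S.sharp.obj (S.y b))).hom := by
          rw [coh1]
      _ = S.sharp.map ((f ◁ (S.sharp.map (S.eta (S.y b)).hom ≫ (S.kap (S.y b) (S.y b)).hom))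
            ≫ (α_ f (S.sharp.obj (S.y b)) (S.sharp.obj (S.y b))).inv)
          ≫ (S.kap (f ≫ (S.sharp.obj (S.y b))) (S.y b)).hom ≫ (S.kap f (S.y b)).hom ▷ (S.sharp.obj (S.y b))
          ≫ (α_ (S.sharp.obj f) (S.sharp.obj (S.y b)) (S.sharp.obj (S.y b))).hom := by
          rw [S.sharp_eta_kap b]
      _ = S.sharp.map (f ◁ S.sharp.map (S.eta (S.y b)).hom)
          ≫ S.sharp.map (f ◁ (S.kap (S.y b) (S.y b)).hom ≫ (α_ f (S.sharp.obj (S.y b)) (S.sharp.obj (S.y b))).inv)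
          ≫ (S.kap (f ≫ (S.sharp.obj (S.y b))) (S.y b)).hom ≫ (S.kap f (S.y b)).hom ▷ (S.sharp.obj (S.y b))
          ≫ (α_ (S.sharp.obj f) (S.sharp.obj (S.y b)) (S.sharp.obj (S.y b))).hom := by
          rw [← Functor.map_comp_assoc]
          simp only [Bicategory.whiskerLeft_comp, Category.assoc]
      _ = S.sharp.map (f ◁ S.sharp.map (S.eta (S.y b)).hom)
          ≫ (S.kap f (S.y b ≫ (S.sharp.obj (S.y b)))).hom ≫ S.sharp.obj f ◁ (S.kap (S.y b) (S.y b)).hom := by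
          rw [pent]
      _ = (S.kap f (S.y b)).hom ≫ S.sharp.obj f ◁ S.sharp.map (S.eta (S.y b)).hom
          ≫ S.sharp.obj f ◁ (S.kap (S.y b) (S.y b)).hom := by
          rw [reassoc_of% h2]
      _ = (S.kap f (S.y b)).hom
          ≫ S.sharp.obj f ◁ ((λ_ (S.sharp.obj (S.y b))).inv ≫ (S.kapId b).inv ▷ (S.sharp.obj (S.y b))) := by
          rw [← Bicategory.whiskerLeft_comp, S.sharp_eta_kap b]
      _ = (S.kap f (S.y b)).hom
          ≫ ((ρ_ (S.sharp.obj f)).inv ≫ S.sharp.obj f ◁ (S.kapId b).inv) ▷ (S.sharp.obj (S.y b))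
          ≫ (α_ (S.sharp.obj f) (S.sharp.obj (S.y b)) (S.sharp.obj (S.y b))).hom := by rw [coh2]
  exact cancel_wr (S.kapId b) h5

end KleisliStructure

/-- A Kleisli structure `P` on a full sub-bicategory `ι : J → K` underlies a
pseudofunctor: setting `P f := (f ≫ y b)^♯` on 1-cells and `P θ := (θ ▷ y b)^♯` on
2-cells, the canonical invertible 2-cells `P (𝟙 a) ≅ 𝟙 (P a)` and
`P (f ≫ g) ≅ P f ≫ P g`, built from `κ_a`, `κ_{g,f}` and `η`, satisfy the coherence
axioms of a pseudofunctor. -/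
theorem kleisli_structure_gives_pseudofunctor {K : Type u} [Bicategory.{w, v} K]
    {J : Type u₂} {ι : J → K} (S : KleisliStructure K J ι) :
    -- the action on 1-cells and 2-cells
    let Pmap : ∀ {a b : J}, (ι a ⟶ ι b) → (S.P a ⟶ S.P b) :=
      fun {a b} f => S.sharp.obj (f ≫ S.y b)
    let Pmap₂ : ∀ {a b : J} {f f' : ι a ⟶ ι b}, (f ⟶ f') → (Pmap f ⟶ Pmap f') :=
      fun {a b f f'} θ => S.sharp.map (θ ▷ S.y b)
    -- the structural invertible 2-cells
    let PmapId : ∀ a : J, Pmap (𝟙 (ι a)) ≅ 𝟙 (S.P a) :=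
      fun a => S.sharp.mapIso (λ_ (S.y a)) ≪≫ S.kapId a
    let PmapComp : ∀ {a b c : J} (f : ι a ⟶ ι b) (g : ι b ⟶ ι c),
        Pmap (f ≫ g) ≅ Pmap f ≫ Pmap g :=
      fun {a b c} f g =>
        S.sharp.mapIso ((α_ f g (S.y c)) ≪≫ whiskerLeftIso f (S.eta (g ≫ S.y c)) ≪≫
          (α_ f (S.y b) (S.sharp.obj (g ≫ S.y c))).symm) ≪≫ S.kap (f ≫ S.y b) (g ≫ S.y c)
    -- functoriality of the action on 2-cells
    (∀ {a b : J} (f : ι a ⟶ ι b), Pmap₂ (𝟙 f) = 𝟙 (Pmap f)) ∧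
    (∀ {a b : J} {f g h : ι a ⟶ ι b} (θ : f ⟶ g) (δ : g ⟶ h),
      Pmap₂ (θ ≫ δ) = Pmap₂ θ ≫ Pmap₂ δ) ∧
    -- compatibility with whiskering
    (∀ {a b c : J} (f : ι a ⟶ ι b) {g h : ι b ⟶ ι c} (θ : g ⟶ h),
      Pmap₂ (f ◁ θ)
        = (PmapComp f g).hom ≫ Pmap f ◁ Pmap₂ θ ≫ (PmapComp f h).inv) ∧
    (∀ {a b c : J} {f g : ι a ⟶ ι b} (θ : f ⟶ g) (h : ι b ⟶ ι c),
      Pmap₂ (θ ▷ h)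
        = (PmapComp f h).hom ≫ Pmap₂ θ ▷ Pmap h ≫ (PmapComp g h).inv) ∧
    -- associativity coherence
    (∀ {a b c d : J} (f : ι a ⟶ ι b) (g : ι b ⟶ ι c) (h : ι c ⟶ ι d),
      Pmap₂ (α_ f g h).hom
        = (PmapComp (f ≫ g) h).hom ≫ (PmapComp f g).hom ▷ Pmap h ≫
            (α_ (Pmap f) (Pmap g) (Pmap h)).hom ≫ Pmap f ◁ (PmapComp g h).inv ≫
            (PmapComp f (g ≫ h)).inv) ∧
    -- unit coherences
    (∀ {a b : J} (f : ι a ⟶ ι b),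
      Pmap₂ (λ_ f).hom
        = (PmapComp (𝟙 (ι a)) f).hom ≫ (PmapId a).hom ▷ Pmap f ≫ (λ_ (Pmap f)).hom) ∧
    (∀ {a b : J} (f : ι a ⟶ ι b),
      Pmap₂ (ρ_ f).hom
        = (PmapComp f (𝟙 (ι b))).hom ≫ Pmap f ◁ (PmapId b).hom ≫ (ρ_ (Pmap f)).hom) := by
  intro Pmap Pmap₂ PmapId PmapComp
  refine ⟨?_, ?_, ?_, ?_, ?_, ?_, ?_⟩
  · intro a b f
    show S.sharp.map (𝟙 f ▷ S.y b) = 𝟙 _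
    rw [Bicategory.id_whiskerRight, CategoryTheory.Functor.map_id]
  · intro a b f g h θ δ
    show S.sharp.map ((θ ≫ δ) ▷ S.y b) = S.sharp.map (θ ▷ S.y b) ≫ S.sharp.map (δ ▷ S.y b)
    rw [Bicategory.comp_whiskerRight, CategoryTheory.Functor.map_comp]
  · intro a b c f g h θ
    rw [← cancel_mono (PmapComp f h).hom]
    simp only [Category.assoc, Iso.inv_hom_id, Category.comp_id]
    simp only [Pmap, Pmap₂, PmapId, PmapComp, Iso.trans_hom, Functor.mapIso_hom,
      Iso.symm_hom, whiskerLeftIso_hom, Category.assoc]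
    have en := S.eta_natural (θ ▷ S.y c)
    have inner : ((f ◁ θ) ▷ S.y c) ≫ ((α_ f h (S.y c)).hom
          ≫ f ◁ (S.eta (h ≫ S.y c)).hom ≫ (α_ f (S.y b) (S.sharp.obj (h ≫ S.y c))).inv)
        = ((α_ f g (S.y c)).hom ≫ f ◁ (S.eta (g ≫ S.y c)).hom
            ≫ (α_ f (S.y b) (S.sharp.obj (g ≫ S.y c))).inv)
          ≫ (f ≫ S.y b) ◁ S.sharp.map (θ ▷ S.y c) := by
      calc ((f ◁ θ) ▷ S.y c) ≫ ((α_ f h (S.y c)).hom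
            ≫ f ◁ (S.eta (h ≫ S.y c)).hom ≫ (α_ f (S.y b) (S.sharp.obj (h ≫ S.y c))).inv)
          = (α_ f g (S.y c)).hom ≫ f ◁ (θ ▷ S.y c ≫ (S.eta (h ≫ S.y c)).hom)
            ≫ (α_ f (S.y b) (S.sharp.obj (h ≫ S.y c))).inv := by
            bicategory
        _ = (α_ f g (S.y c)).hom
            ≫ f ◁ ((S.eta (g ≫ S.y c)).hom ≫ S.y b ◁ S.sharp.map (θ ▷ S.y c))
            ≫ (α_ f (S.y b) (S.sharp.obj (h ≫ S.y c))).inv := by rw [en]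
        _ = _ := by bicategory
    rw [← Functor.map_comp_assoc, inner, Functor.map_comp_assoc,
      S.kap_natural_right (f ≫ S.y b) (θ ▷ S.y c)]
  · intro a b c f g θ h
    rw [← cancel_mono (PmapComp g h).hom]
    simp only [Category.assoc, Iso.inv_hom_id, Category.comp_id]
    simp only [Pmap, Pmap₂, PmapId, PmapComp, Iso.trans_hom, Functor.mapIso_hom,
      Iso.symm_hom, whiskerLeftIso_hom, Category.assoc]
    have ex := whisker_exchange θ (S.eta (h ≫ S.y c)).hom
    have inner : ((θ ▷ h) ▷ S.y c) ≫ ((α_ g h (S.y c)).hom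
          ≫ g ◁ (S.eta (h ≫ S.y c)).hom ≫ (α_ g (S.y b) (S.sharp.obj (h ≫ S.y c))).inv)
        = ((α_ f h (S.y c)).hom ≫ f ◁ (S.eta (h ≫ S.y c)).hom
            ≫ (α_ f (S.y b) (S.sharp.obj (h ≫ S.y c))).inv)
          ≫ (θ ▷ S.y b) ▷ S.sharp.obj (h ≫ S.y c) := by
      calc ((θ ▷ h) ▷ S.y c) ≫ ((α_ g h (S.y c)).hom
            ≫ g ◁ (S.eta (h ≫ S.y c)).hom ≫ (α_ g (S.y b) (S.sharp.obj (h ≫ S.y c))).inv)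
          = (α_ f h (S.y c)).hom
            ≫ (θ ▷ (h ≫ S.y c) ≫ g ◁ (S.eta (h ≫ S.y c)).hom)
            ≫ (α_ g (S.y b) (S.sharp.obj (h ≫ S.y c))).inv := by bicategory
        _ = (α_ f h (S.y c)).hom
            ≫ (f ◁ (S.eta (h ≫ S.y c)).hom ≫ θ ▷ (S.y b ≫ S.sharp.obj (h ≫ S.y c)))
            ≫ (α_ g (S.y b) (S.sharp.obj (h ≫ S.y c))).inv := by rw [← ex]
        _ = _ := by bicategory
    rw [← Functor.map_comp_assoc, inner, Functor.map_comp_assoc,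
      S.kap_natural_left (θ ▷ S.y b) (h ≫ S.y c)]
  · intro a b c d f g h
    have claim5 : Pmap₂ (α_ f g h).hom ≫ (PmapComp f (g ≫ h)).hom
          ≫ Pmap f ◁ (PmapComp g h).hom ≫ (α_ (Pmap f) (Pmap g) (Pmap h)).inv
        = (PmapComp (f ≫ g) h).hom ≫ (PmapComp f g).hom ▷ Pmap h := by
      simp only [Pmap, Pmap₂, PmapId, PmapComp, Iso.trans_hom, Functor.mapIso_hom,
        Iso.symm_hom, whiskerLeftIso_hom, Category.assoc, Bicategory.whiskerLeft_comp,
        comp_whiskerRight]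
      have hp := S.pentagon_coh (f ≫ S.y b) (g ≫ S.y c) (h ≫ S.y d)
      have pent5 : (S.kap (f ≫ S.y b) ((g ≫ S.y c) ≫ S.sharp.obj (h ≫ S.y d))).hom
            ≫ S.sharp.obj (f ≫ S.y b) ◁ (S.kap (g ≫ S.y c) (h ≫ S.y d)).hom
            ≫ (α_ (S.sharp.obj (f ≫ S.y b)) (S.sharp.obj (g ≫ S.y c))
                (S.sharp.obj (h ≫ S.y d))).inv
          = S.sharp.map ((f ≫ S.y b) ◁ (S.kap (g ≫ S.y c) (h ≫ S.y d)).hom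
              ≫ (α_ (f ≫ S.y b) (S.sharp.obj (g ≫ S.y c)) (S.sharp.obj (h ≫ S.y d))).inv)
            ≫ (S.kap ((f ≫ S.y b) ≫ S.sharp.obj (g ≫ S.y c)) (h ≫ S.y d)).hom
            ≫ (S.kap (f ≫ S.y b) (g ≫ S.y c)).hom ▷ S.sharp.obj (h ≫ S.y d) := by
        rw [hp, ← Functor.map_comp_assoc]
        have hid : ((f ≫ S.y b) ◁ (S.kap (g ≫ S.y c) (h ≫ S.y d)).hom
              ≫ (α_ (f ≫ S.y b) (S.sharp.obj (g ≫ S.y c)) (S.sharp.obj (h ≫ S.y d))).inv)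
            ≫ ((α_ (f ≫ S.y b) (S.sharp.obj (g ≫ S.y c)) (S.sharp.obj (h ≫ S.y d))).hom
              ≫ (f ≫ S.y b) ◁ (S.kap (g ≫ S.y c) (h ≫ S.y d)).inv) = 𝟙 _ := by
          simp only [Category.assoc, Iso.inv_hom_id_assoc, Bicategory.whiskerLeft_hom_inv]
        rw [hid, CategoryTheory.Functor.map_id, Category.id_comp]
      rw [← reassoc_of% (S.kap_natural_right (f ≫ S.y b)
        ((α_ g h (S.y d)).hom ≫ g ◁ (S.eta (h ≫ S.y d)).hom
          ≫ (α_ g (S.y c) (S.sharp.obj (h ≫ S.y d))).inv)),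
        pent5,
        ← reassoc_of% (S.kap_natural_left
          ((α_ f g (S.y c)).hom ≫ f ◁ (S.eta (g ≫ S.y c)).hom
            ≫ (α_ f (S.y b) (S.sharp.obj (g ≫ S.y c))).inv) (h ≫ S.y d)),
        ← Functor.map_comp_assoc, ← Functor.map_comp_assoc, ← Functor.map_comp_assoc,
        ← Functor.map_comp_assoc]
      congr 1
      refine congrArg _ ?_
      have en5 := S.eta_natural ((α_ g h (S.y d)).hom ≫ g ◁ (S.eta (h ≫ S.y d)).hom
        ≫ (α_ g (S.y c) (S.sharp.obj (h ≫ S.y d))).inv)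
      trans ((α_ f g h).hom ▷ S.y d ≫ (α_ f (g ≫ h) (S.y d)).hom
        ≫ f ◁ ((S.eta ((g ≫ h) ≫ S.y d)).hom
            ≫ S.y b ◁ S.sharp.map ((α_ g h (S.y d)).hom ≫ g ◁ (S.eta (h ≫ S.y d)).hom
              ≫ (α_ g (S.y c) (S.sharp.obj (h ≫ S.y d))).inv))
        ≫ (α_ f (S.y b) (S.sharp.obj ((g ≫ S.y c) ≫ S.sharp.obj (h ≫ S.y d)))).inv
        ≫ (f ≫ S.y b) ◁ (S.kap (g ≫ S.y c) (h ≫ S.y d)).hom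
        ≫ (α_ (f ≫ S.y b) (S.sharp.obj (g ≫ S.y c)) (S.sharp.obj (h ≫ S.y d))).inv)
      · bicategory
      rw [← en5, S.eta_comp (g ≫ S.y c) (h ≫ S.y d)]
      trans ((α_ f g h).hom ▷ S.y d ≫ (α_ f (g ≫ h) (S.y d)).hom
        ≫ f ◁ (((α_ g h (S.y d)).hom ≫ g ◁ (S.eta (h ≫ S.y d)).hom
              ≫ (α_ g (S.y c) (S.sharp.obj (h ≫ S.y d))).inv)
            ≫ (S.eta (g ≫ S.y c)).hom ▷ S.sharp.obj (h ≫ S.y d)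
            ≫ (α_ (S.y b) (S.sharp.obj (g ≫ S.y c)) (S.sharp.obj (h ≫ S.y d))).hom)
        ≫ (α_ f (S.y b) (S.sharp.obj (g ≫ S.y c) ≫ S.sharp.obj (h ≫ S.y d))).inv
        ≫ ((f ≫ S.y b) ◁ (S.kap (g ≫ S.y c) (h ≫ S.y d)).inv
            ≫ (f ≫ S.y b) ◁ (S.kap (g ≫ S.y c) (h ≫ S.y d)).hom)
        ≫ (α_ (f ≫ S.y b) (S.sharp.obj (g ≫ S.y c)) (S.sharp.obj (h ≫ S.y d))).inv)
      · bicategory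
      rw [Bicategory.whiskerLeft_inv_hom]
      bicategory
    rw [← reassoc_of% claim5]
    simp
  · intro a b f
    simp only [Pmap, Pmap₂, PmapId, PmapComp, Iso.trans_hom, Functor.mapIso_hom,
      Iso.symm_hom, whiskerLeftIso_hom, Category.assoc, comp_whiskerRight]
    rw [← reassoc_of% (S.kap_natural_left (λ_ (S.y a)).hom (f ≫ S.y b)),
      ← Functor.map_comp_assoc]
    have claimA : ((α_ (𝟙 (ι a)) f (S.y b)).hom ≫ 𝟙 (ι a) ◁ (S.eta (f ≫ S.y b)).hom
          ≫ (α_ (𝟙 (ι a)) (S.y a) (S.sharp.obj (f ≫ S.y b))).inv)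
          ≫ (λ_ (S.y a)).hom ▷ S.sharp.obj (f ≫ S.y b)
        = (λ_ f).hom ▷ S.y b ≫ (S.eta (f ≫ S.y b)).hom := by
      bicategory
    rw [claimA, Functor.map_comp_assoc, S.unit_coh (f ≫ S.y b), Category.comp_id]
  · intro a b f
    simp only [Pmap, Pmap₂, PmapId, PmapComp, Iso.trans_hom, Functor.mapIso_hom,
      Iso.symm_hom, whiskerLeftIso_hom, Category.assoc, Bicategory.whiskerLeft_comp]
    rw [← reassoc_of% (S.kap_natural_right (f ≫ S.y b) (λ_ (S.y b)).hom),
      ← Functor.map_comp_assoc]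
    have en := S.eta_natural (λ_ (S.y b)).hom
    have claimB : ((α_ f (𝟙 (ι b)) (S.y b)).hom ≫ f ◁ (S.eta (𝟙 (ι b) ≫ S.y b)).hom
          ≫ (α_ f (S.y b) (S.sharp.obj (𝟙 (ι b) ≫ S.y b))).inv)
          ≫ (f ≫ S.y b) ◁ S.sharp.map (λ_ (S.y b)).hom
        = (ρ_ f).hom ▷ S.y b
          ≫ ((ρ_ (f ≫ S.y b)).inv ≫ (f ≫ S.y b) ◁ (S.kapId b).inv) := by
      calc ((α_ f (𝟙 (ι b)) (S.y b)).hom ≫ f ◁ (S.eta (𝟙 (ι b) ≫ S.y b)).hom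
            ≫ (α_ f (S.y b) (S.sharp.obj (𝟙 (ι b) ≫ S.y b))).inv)
            ≫ (f ≫ S.y b) ◁ S.sharp.map (λ_ (S.y b)).hom
          = (α_ f (𝟙 (ι b)) (S.y b)).hom
            ≫ f ◁ ((S.eta (𝟙 (ι b) ≫ S.y b)).hom ≫ S.y b ◁ S.sharp.map (λ_ (S.y b)).hom)
            ≫ (α_ f (S.y b) (S.sharp.obj (S.y b))).inv := by bicategory
        _ = (α_ f (𝟙 (ι b)) (S.y b)).hom
            ≫ f ◁ ((λ_ (S.y b)).hom ≫ (S.eta (S.y b)).hom)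
            ≫ (α_ f (S.y b) (S.sharp.obj (S.y b))).inv := by rw [← en]
        _ = (α_ f (𝟙 (ι b)) (S.y b)).hom
            ≫ f ◁ ((λ_ (S.y b)).hom ≫ (ρ_ (S.y b)).inv ≫ S.y b ◁ (S.kapId b).inv)
            ≫ (α_ f (S.y b) (S.sharp.obj (S.y b))).inv := by rw [S.eta_id b]
        _ = _ := by bicategory
    rw [claimB, Functor.map_comp_assoc, reassoc_of% (S.kap_right_unit (f ≫ S.y b))]
    simp [← Bicategory.whiskerLeft_comp]
end

section
/- Given monads P and S on a category C with a distributive law λ : S P ⟶ P S, the monad S lifts/extends to a monad S_P on the Kleisli category of P: S_P acts on objects as S, and sends a Kleisli morphism f : c → P d to λ_d ∘ S f : S c → P S d; this defines a functor on Kl(P) and the unit and multiplication of S induce a monad structure on S_P. Moreover, the Kleisli category of the composite monad P S on C is isomorphic to the Kleisli category of the monad S_P on Kl(P). -/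
open CategoryTheory

/-- Given monads `P` and `S` on `C` with a distributive law `lam : S P ⟶ P S`, the monad
`S` extends to a monad `S_P` on the Kleisli category of `P` (whose objects are those of
`C` and whose morphisms `c ⟶ d` are morphisms `c ⟶ P d` of `C`, with composition
`g · f = μ^P ∘ P g ∘ f`): on objects `S_P` acts as `S` and it sends a Kleisli morphism
`f : c ⟶ P d` to `lam_d ∘ S f : S c ⟶ P (S d)`; this is a functor on `Kl(P)`, the unit
and multiplication of `S` induce a monad structure on it, and the Kleisli category of the
composite monad `P S` is isomorphic to the Kleisli category of `S_P` (same objects and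
hom-sets, and the two compositions agree). -/
theorem distributive_law_extends_monad_to_kleisli {C : Type u} [Category.{v} C]
    (P S : Monad C)
    (lam : (P : C ⥤ C) ⋙ (S : C ⥤ C) ⟶ (S : C ⥤ C) ⋙ (P : C ⥤ C))
    (unit_P : ∀ x : C, S.map (P.η.app x) ≫ lam.app x = P.η.app (S.obj x))
    (unit_S : ∀ x : C, S.η.app (P.obj x) ≫ lam.app x = P.map (S.η.app x))
    (mul_P : ∀ x : C, S.map (P.μ.app x) ≫ lam.app x =
      lam.app (P.obj x) ≫ P.map (lam.app x) ≫ P.μ.app (S.obj x))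
    (mul_S : ∀ x : C, S.μ.app (P.obj x) ≫ lam.app x =
      S.map (lam.app x) ≫ lam.app (S.obj x) ≫ P.map (S.μ.app x)) :
    -- composition in the Kleisli category of `P`
    let kcomp : ∀ {c d e : C}, (c ⟶ P.obj d) → (d ⟶ P.obj e) → (c ⟶ P.obj e) :=
      fun f g => f ≫ P.map g ≫ P.μ.app _
    -- the extension `S_P` on Kleisli morphisms
    let SPmap : ∀ {c d : C}, (c ⟶ P.obj d) → (S.obj c ⟶ P.obj (S.obj d)) :=
      fun {_ d} f => S.map f ≫ lam.app d
    -- the unit and multiplication of `S_P`, induced by those of `S`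
    let ηSP : ∀ c : C, c ⟶ P.obj (S.obj c) := fun c => S.η.app c ≫ P.η.app (S.obj c)
    let μSP : ∀ c : C, S.obj (S.obj c) ⟶ P.obj (S.obj c) :=
      fun c => S.μ.app c ≫ P.η.app (S.obj c)
    -- (a) `S_P` is a functor on the Kleisli category of `P`
    (∀ c : C, SPmap (P.η.app c) = P.η.app (S.obj c)) ∧
    (∀ (c d e : C) (f : c ⟶ P.obj d) (g : d ⟶ P.obj e),
      SPmap (kcomp f g) = kcomp (SPmap f) (SPmap g)) ∧
    -- (b) the unit and multiplication of `S_P` are natural in `Kl(P)` and satisfy the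
    -- monad laws there
    (∀ (c d : C) (f : c ⟶ P.obj d), kcomp f (ηSP d) = kcomp (ηSP c) (SPmap f)) ∧
    (∀ (c d : C) (f : c ⟶ P.obj d),
      kcomp (SPmap (SPmap f)) (μSP d) = kcomp (μSP c) (SPmap f)) ∧
    (∀ c : C, kcomp (ηSP (S.obj c)) (μSP c) = P.η.app (S.obj c)) ∧
    (∀ c : C, kcomp (SPmap (ηSP c)) (μSP c) = P.η.app (S.obj c)) ∧
    (∀ c : C, kcomp (SPmap (μSP c)) (μSP c) = kcomp (μSP (S.obj c)) (μSP c)) ∧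
    -- (c) the Kleisli category of the composite monad `P S` is isomorphic to the Kleisli
    -- category of `S_P`: both have objects those of `C` and hom-sets `c ⟶ P (S d)`, the
    -- identities agree, and the composite-monad Kleisli composition equals the
    -- `S_P`-Kleisli composition computed in `Kl(P)`
    (∀ c : C, ηSP c = S.η.app c ≫ P.η.app (S.obj c)) ∧
    (∀ (c d e : C) (f : c ⟶ P.obj (S.obj d)) (g : d ⟶ P.obj (S.obj e)),
      f ≫ P.map (S.map g) ≫
          (P.map (lam.app (S.obj e)) ≫ P.μ.app (S.obj (S.obj e)) ≫ P.map (S.μ.app e))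
        = kcomp f (kcomp (SPmap g) (μSP e))) := by
  intro kcomp SPmap ηSP μSP
  simp only [kcomp, SPmap, ηSP, μSP]
  have hnat : ∀ {x y : C} (k : x ⟶ y), P.η.app x ≫ P.map k = k ≫ P.η.app y := by
    intro x y k; simpa using (P.η.naturality k).symm
  have hη : ∀ {x y : C} (k : x ⟶ P.obj y), P.η.app x ≫ P.map k ≫ P.μ.app y = k := by
    intro x y k
    rw [← Category.assoc, hnat k, Category.assoc, Monad.left_unit]
    simp
  refine ⟨?_, ?_, ?_, ?_, ?_, ?_, ?_, ?_, ?_⟩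
  · intro c; exact unit_P c
  · intro c d e f g
    simp only [Functor.map_comp, Category.assoc, mul_P]
    have h := lam.naturality g
    simp only [Functor.comp_map] at h
    rw [reassoc_of% h]
  · intro c d f
    rw [Category.assoc, hη]
    have h2 : S.η.app c ≫ S.map f = f ≫ S.η.app (P.obj d) := by
      simpa using (S.η.naturality f).symm
    rw [reassoc_of% h2, unit_S]
    simp
  · intro c d f
    simp only [Category.assoc]
    rw [hη]
    have hμS : S.map (S.map f) ≫ S.μ.app (P.obj d) = S.μ.app c ≫ S.map f := by
      simpa using S.μ.naturality f
    simp only [Functor.map_comp, Category.assoc, Monad.right_unit, Category.comp_id, Functor.id_obj]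
    rw [← mul_S, ← Category.assoc, hμS, Category.assoc]
  · intro c
    simp only [Category.assoc]
    rw [hη, Monad.left_unit_assoc]
  · intro c
    simp only [Functor.map_comp, Category.assoc, Monad.right_unit, Category.comp_id, Functor.id_obj]
    rw [reassoc_of% (unit_P (S.obj c)), hnat, Monad.right_unit_assoc]
  · intro c
    simp only [Functor.map_comp, Category.assoc, Monad.right_unit, Category.comp_id, Functor.id_obj]
    rw [reassoc_of% (unit_P (S.obj c)), hnat, ← Category.assoc, Monad.assoc,
      Category.assoc]
  · intro c; trivial
  · intro c d e f g
    simp only [Functor.map_comp, Category.assoc, Monad.right_unit, Category.comp_id, Functor.id_obj]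
    have hμ : P.map (P.map (S.μ.app e)) ≫ P.μ.app (S.obj e) =
        P.μ.app (S.obj (S.obj e)) ≫ P.map (S.μ.app e) := by
      simpa using P.μ.naturality (S.μ.app e)
    rw [hμ]
end

section
/- Every profunctor M : Aᵒᵖ × B ⥤ Type between small categories factors through its category of elements: letting E(M) be the category of elements of M (objects are triples (a, b, m) with m ∈ M(a, b)) with projections p : E(M) ⥤ B and q : E(M) ⥤ A, there is an isomorphism of profunctors M ≅ q_* ∘ p^*, where p^* and q_* are the representable profunctors associated with p and q and ∘ is profunctor composition by coends. -/
open CategoryTheory Opposite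

universe u

abbrev Prof (A B : Type u) [SmallCategory A] [SmallCategory B] :=
  Bᵒᵖ × A ⥤ Type u

namespace Prof

variable {A B C D : Type u} [SmallCategory A] [SmallCategory B] [SmallCategory C]
  [SmallCategory D]

structure Pt (M : Prof A B) (N : Prof B C) (p : Cᵒᵖ × A) : Type u where
  mid : B
  n : N.obj (p.1, mid)
  m : M.obj (op mid, p.2)

inductive CRel (M : Prof A B) (N : Prof B C) (p : Cᵒᵖ × A) :
    Pt M N p → Pt M N p → Prop
  | mk {b b' : B} (f : b ⟶ b') (n : N.obj (p.1, b)) (m : M.obj (op b', p.2)) :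
      CRel M N p ⟨b', N.map (𝟙 p.1, f) n, m⟩ ⟨b, n, M.map (f.op, 𝟙 p.2) m⟩

def comp (M : Prof A B) (N : Prof B C) : Prof A C where
  obj p := Quot (CRel M N p)
  map {p q} g := TypeCat.ofHom <|
    Quot.lift
      (fun x => Quot.mk _ ⟨x.mid, N.map (g.1, 𝟙 x.mid) x.n, M.map (𝟙 (op x.mid), g.2) x.m⟩)
      (by
        rintro x y h
        cases h with
        | @mk b b' f n m =>
          have e1 : N.map ((g.1, 𝟙 b') : (p.1, b') ⟶ (q.1, b')) (N.map (𝟙 p.1, f) n)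
              = N.map ((𝟙 q.1, f) : (q.1, b) ⟶ (q.1, b')) (N.map (g.1, 𝟙 b) n) := by
            rw [← FunctorToTypes.map_comp_apply, ← FunctorToTypes.map_comp_apply,
              prod_comp, prod_comp]
            simp only [Category.id_comp, Category.comp_id]
          have e2 : M.map ((f.op, 𝟙 q.2) : (op b', q.2) ⟶ (op b, q.2))
                (M.map (𝟙 (op b'), g.2) m)
              = M.map ((𝟙 (op b), g.2) : (op b, p.2) ⟶ (op b, q.2))
                (M.map (f.op, 𝟙 p.2) m) := by
            rw [← FunctorToTypes.map_comp_apply, ← FunctorToTypes.map_comp_apply,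
              prod_comp, prod_comp]
            simp only [Category.id_comp, Category.comp_id]
          dsimp only
          rw [e1, ← e2]
          exact Quot.sound (CRel.mk f _ _))
  map_id p := by
    ext x
    induction x using Quot.ind with
    | _ x =>
      show Quot.mk (CRel M N p)
          ⟨x.mid, N.map (𝟙 (p.1, x.mid)) x.n, M.map (𝟙 (op x.mid, p.2)) x.m⟩
        = Quot.mk (CRel M N p) x
      rw [FunctorToTypes.map_id_apply, FunctorToTypes.map_id_apply]
  map_comp {p q r} g h := by
    ext x
    induction x using Quot.ind with
    | _ x =>
      show Quot.mk (CRel M N r)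
          ⟨x.mid, N.map ((g ≫ h).1, 𝟙 x.mid) x.n, M.map (𝟙 (op x.mid), (g ≫ h).2) x.m⟩
        = Quot.mk (CRel M N r)
          ⟨x.mid, N.map ((h.1, 𝟙 x.mid) : (q.1, x.mid) ⟶ (r.1, x.mid))
              (N.map ((g.1, 𝟙 x.mid) : (p.1, x.mid) ⟶ (q.1, x.mid)) x.n),
            M.map ((𝟙 (op x.mid), h.2) : (op x.mid, q.2) ⟶ (op x.mid, r.2))
              (M.map ((𝟙 (op x.mid), g.2) : (op x.mid, p.2) ⟶ (op x.mid, q.2)) x.m)⟩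
      rw [← FunctorToTypes.map_comp_apply, ← FunctorToTypes.map_comp_apply,
        prod_comp, prod_comp, prod_comp]
      simp only [Category.id_comp, Category.comp_id]

@[simps]
def idP (A : Type u) [SmallCategory A] : Prof A A where
  obj p := p.1.unop ⟶ p.2
  map g := TypeCat.ofHom fun h => g.1.unop ≫ h ≫ g.2
  map_id p := by ext h; simp
  map_comp g h := by ext k; simp

/-- Left whiskering: act on the first factor of a composite. -/
def whiskL {M M' : Prof A B} (θ : M ⟶ M') (N : Prof B C) : comp M N ⟶ comp M' N where
  app p := TypeCat.ofHom <|
    Quot.lift (fun x => Quot.mk _ ⟨x.mid, x.n, θ.app (op x.mid, p.2) x.m⟩)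
      (by
        rintro x y h
        cases h with
        | @mk b b' f n m =>
          dsimp only
          rw [FunctorToTypes.naturality]
          exact Quot.sound (CRel.mk f _ _))
  naturality p q g := by
    ext x
    induction x using Quot.ind with
    | _ x =>
      show Quot.mk (CRel M' N q)
          ⟨x.mid, N.map (g.1, 𝟙 x.mid) x.n, θ.app (op x.mid, q.2) (M.map (𝟙 (op x.mid), g.2) x.m)⟩
        = Quot.mk (CRel M' N q)
          ⟨x.mid, N.map (g.1, 𝟙 x.mid) x.n, M'.map (𝟙 (op x.mid), g.2) (θ.app (op x.mid, p.2) x.m)⟩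
      rw [FunctorToTypes.naturality]

/-- Right whiskering: act on the second factor of a composite. -/
def whiskR (M : Prof A B) {N N' : Prof B C} (δ : N ⟶ N') : comp M N ⟶ comp M N' where
  app p := TypeCat.ofHom <|
    Quot.lift (fun x => Quot.mk _ ⟨x.mid, δ.app (p.1, x.mid) x.n, x.m⟩)
      (by
        rintro x y h
        cases h with
        | @mk b b' f n m =>
          dsimp only
          rw [FunctorToTypes.naturality]
          exact Quot.sound (CRel.mk f _ _))
  naturality p q g := by
    ext x
    induction x using Quot.ind with
    | _ x =>
      show Quot.mk (CRel M N' q)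
          ⟨x.mid, δ.app (q.1, x.mid) (N.map (g.1, 𝟙 x.mid) x.n), M.map (𝟙 (op x.mid), g.2) x.m⟩
        = Quot.mk (CRel M N' q)
          ⟨x.mid, N'.map (g.1, 𝟙 x.mid) (δ.app (p.1, x.mid) x.n), M.map (𝟙 (op x.mid), g.2) x.m⟩
      rw [FunctorToTypes.naturality]

theorem mapmap (M : Prof A B) {P Q R : Bᵒᵖ × A} (w : P ⟶ Q) (w' : Q ⟶ R)
    (z : M.obj P) :
    M.map w' (M.map w z) = M.map ((w.1 ≫ w'.1, w.2 ≫ w'.2) : P ⟶ R) z := by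
  rw [← FunctorToTypes.map_comp_apply]
  rfl

theorem mapid (M : Prof A B) {x : Bᵒᵖ} {a : A} (z : M.obj (x, a)) :
    M.map ((𝟙 x, 𝟙 a) : (x, a) ⟶ (x, a)) z = z := by
  have : ((𝟙 x, 𝟙 a) : (x, a) ⟶ (x, a)) = 𝟙 ((x, a) : Bᵒᵖ × A) := rfl
  rw [this, FunctorToTypes.map_id_apply]

/-- Left unit collapse `id_A ⋙ M ⟶ M`. -/
def lcol (M : Prof A B) : comp (idP A) M ⟶ M where
  app p := TypeCat.ofHom <|
    Quot.lift
      (fun x => M.map ((𝟙 p.1, x.m) : (p.1, x.mid) ⟶ (p.1, p.2)) x.n)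
      (by
        rintro x y h
        cases h with
        | @mk b b' f n m =>
          show M.map ((𝟙 p.1, m) : (p.1, b') ⟶ (p.1, p.2))
              (M.map ((𝟙 p.1, f) : (p.1, b) ⟶ (p.1, b')) n)
            = M.map ((𝟙 p.1, (idP A).map ((f.op, 𝟙 p.2) : (op b', p.2) ⟶ (op b, p.2)) m) :
                (p.1, b) ⟶ (p.1, p.2)) n
          rw [mapmap]
          dsimp only [idP_map]
          simp <;> rfl)
  naturality p q g := by
    ext x
    induction x using Quot.ind with
    | _ x =>
      show M.map ((𝟙 q.1, (idP A).map ((𝟙 (op x.mid), g.2) : (op x.mid, p.2) ⟶ (op x.mid, q.2)) x.m) :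
            (q.1, x.mid) ⟶ (q.1, q.2))
          (M.map ((g.1, 𝟙 x.mid) : (p.1, x.mid) ⟶ (q.1, x.mid)) x.n)
        = M.map g (M.map ((𝟙 p.1, x.m) : (p.1, x.mid) ⟶ (p.1, p.2)) x.n)
      rw [mapmap, mapmap]
      dsimp only [idP_map]
      simp only [Category.comp_id, Category.id_comp]
      exact congrArg (fun k => M.map ((g.1, k) : (p.1, x.mid) ⟶ (q.1, q.2)) x.n)
        (show 𝟙 x.mid ≫ ((𝟙 (op x.mid)).unop ≫ x.m ≫ g.2) = x.m ≫ g.2 by simp)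

/-- Right unit collapse `M ⋙ id_B ⟶ M`. -/
def rcol (M : Prof A B) : comp M (idP B) ⟶ M where
  app p := TypeCat.ofHom <|
    Quot.lift
      (fun x => M.map ((x.n.op, 𝟙 p.2) : (op x.mid, p.2) ⟶ (p.1, p.2)) x.m)
      (by
        rintro x y h
        cases h with
        | @mk b b' f n m =>
          show M.map ((((idP B).map ((𝟙 p.1, f) : (p.1, b) ⟶ (p.1, b')) n).op, 𝟙 p.2) :
              (op b', p.2) ⟶ (p.1, p.2)) m
            = M.map ((n.op, 𝟙 p.2) : (op b, p.2) ⟶ (p.1, p.2))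
                (M.map ((f.op, 𝟙 p.2) : (op b', p.2) ⟶ (op b, p.2)) m)
          rw [mapmap]
          dsimp only [idP_map]
          simp [op_comp] <;> rfl)
  naturality p q g := by
    ext x
    induction x using Quot.ind with
    | _ x =>
      show M.map ((((idP B).map ((g.1, 𝟙 x.mid) : (p.1, x.mid) ⟶ (q.1, x.mid)) x.n).op, 𝟙 q.2) :
            (op x.mid, q.2) ⟶ (q.1, q.2))
          (M.map ((𝟙 (op x.mid), g.2) : (op x.mid, p.2) ⟶ (op x.mid, q.2)) x.m)
        = M.map g (M.map ((x.n.op, 𝟙 p.2) : (op x.mid, p.2) ⟶ (p.1, p.2)) x.m)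
      rw [mapmap, mapmap]
      dsimp only [idP_map]
      simp [op_comp] <;> rfl

/-- Associator (forward direction) for profunctor composition. -/
def assocHom (M : Prof A B) (N : Prof B C) (O : Prof C D) :
    comp (comp M N) O ⟶ comp M (comp N O) where
  app p := TypeCat.ofHom <|
    Quot.lift
      (fun (x : Pt (comp M N) O p) =>
        Quot.lift
          (fun (y : Pt M N (op x.mid, p.2)) => Quot.mk (CRel M (comp N O) p)
            ⟨y.mid, (Quot.mk (CRel N O (p.1, y.mid)) ⟨x.mid, x.n, y.n⟩ :
              (comp N O).obj (p.1, y.mid)), y.m⟩)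
          (by
            rintro y y' h
            cases h with
            | @mk b b' f n' m' =>
              have h := Quot.sound (CRel.mk (M := M) (N := comp N O) (p := p) f
                (Quot.mk (CRel N O (p.1, b)) ⟨x.mid, x.n, n'⟩ :
                  (comp N O).obj (p.1, b)) m')
              refine Eq.trans ?_ h
              show _ = Quot.mk (CRel M (comp N O) p) ⟨b', (Quot.mk (CRel N O (p.1, b'))
                ⟨x.mid, O.map ((𝟙 p.1, 𝟙 x.mid) : (p.1, x.mid) ⟶ (p.1, x.mid)) x.n, _⟩ :
                (comp N O).obj (p.1, b')), m'⟩
              rw [mapid])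
          x.m)
      (by
        rintro x x' h
        cases h with
        | @mk c c' f n m =>
          dsimp only
          induction m using Quot.ind with
          | _ y =>
            refine Eq.trans ?_ (congrArg (fun w => Quot.mk (CRel M (comp N O) p)
              (⟨y.mid, _, w⟩ : Pt M (comp N O) p)) (mapid M y.m).symm)
            exact congrArg (fun z => Quot.mk (CRel M (comp N O) p) ⟨y.mid, z, y.m⟩)
              (Quot.sound (CRel.mk (M := N) (N := O) (p := (p.1, y.mid)) f n y.n)))
  naturality p q g := by
    ext x
    induction x using Quot.ind with
    | _ x =>
      obtain ⟨c, o, m⟩ := x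
      induction m using Quot.ind with
      | _ y => rfl

/-- Associator (inverse direction) for profunctor composition. -/
def assocInv (M : Prof A B) (N : Prof B C) (O : Prof C D) :
    comp M (comp N O) ⟶ comp (comp M N) O where
  app p := TypeCat.ofHom <|
    Quot.lift
      (fun (x : Pt M (comp N O) p) =>
        Quot.lift
          (fun (y : Pt N O (p.1, x.mid)) => Quot.mk (CRel (comp M N) O p)
            ⟨y.mid, y.n, (Quot.mk (CRel M N (op y.mid, p.2)) ⟨x.mid, y.m, x.m⟩ :
              (comp M N).obj (op y.mid, p.2))⟩)
          (by
            rintro y y' h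
            cases h with
            | @mk c c' f n' m' =>
              have h := Quot.sound (CRel.mk (M := comp M N) (N := O) (p := p) f n'
                (Quot.mk (CRel M N (op c', p.2)) ⟨x.mid, m', x.m⟩ :
                  (comp M N).obj (op c', p.2)))
              refine h.trans ?_
              show Quot.mk (CRel (comp M N) O p) ⟨c, n', (Quot.mk (CRel M N (op c, p.2)) ⟨x.mid, _,
                M.map ((𝟙 (op x.mid), 𝟙 p.2) : (op x.mid, p.2) ⟶ (op x.mid, p.2)) x.m⟩ :
                (comp M N).obj (op c, p.2))⟩ = _
              rw [mapid])
          x.n)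
      (by
        rintro x x' h
        cases h with
        | @mk b b' f n m =>
          dsimp only
          induction n using Quot.ind with
          | _ y =>
            show Quot.mk (CRel (comp M N) O p) ⟨y.mid,
              O.map ((𝟙 p.1, 𝟙 y.mid) : (p.1, y.mid) ⟶ (p.1, y.mid)) y.n, _⟩ = _
            rw [mapid]
            exact congrArg
              (fun z => Quot.mk (CRel (comp M N) O p) ⟨y.mid, y.n, z⟩)
              (Quot.sound (CRel.mk (M := M) (N := N) (p := (op y.mid, p.2)) f y.m m)))
  naturality p q g := by
    ext x
    induction x using Quot.ind with
    | _ x =>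
      obtain ⟨b, n, m⟩ := x
      induction n using Quot.ind with
      | _ y => rfl

/-- The covariant representable profunctor `f_*` of a functor, `f_*(b, a) = B(b, f a)`. -/
@[simps]
def lower (f : A ⥤ B) : Prof A B where
  obj p := p.1.unop ⟶ f.obj p.2
  map g := TypeCat.ofHom fun h => g.1.unop ≫ h ≫ f.map g.2
  map_id p := by ext h; simp
  map_comp g h := by ext k; simp

/-- The contravariant representable profunctor `f^*` of a functor, `f^*(a, b) = B(f a, b)`. -/
@[simps]
def upper (f : A ⥤ B) : Prof B A where
  obj p := f.obj p.1.unop ⟶ p.2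
  map g := TypeCat.ofHom fun h => f.map g.1.unop ≫ h ≫ g.2
  map_id p := by ext h; simp
  map_comp g h := by ext k; simp

end Prof

namespace Prof

open Opposite

variable {A B : Type u} [SmallCategory A] [SmallCategory B]

/-- The category of elements of a profunctor `M : Aᵒᵖ × B ⥤ Type` (a two-sided
discrete fibration): objects are triples `(a, b, m)` with `m ∈ M(a, b)`. -/
structure Elts (M : Prof B A) : Type u where
  a : A
  b : B
  m : M.obj (op a, b)

/-- Morphisms in the category of elements: pairs of morphisms compatible with the
element actions. -/
@[ext]
structure EltsHom {M : Prof B A} (x y : Elts M) : Type u where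
  u : x.a ⟶ y.a
  v : x.b ⟶ y.b
  compat : M.map ((u.op, 𝟙 y.b) : (op y.a, y.b) ⟶ (op x.a, y.b)) y.m
    = M.map ((𝟙 (op x.a), v) : (op x.a, x.b) ⟶ (op x.a, y.b)) x.m

@[simps]
def EltsHom.id {M : Prof B A} (x : Elts M) : EltsHom x x :=
  ⟨𝟙 x.a, 𝟙 x.b, by simp⟩

@[simps]
def EltsHom.comp {M : Prof B A} {x y z : Elts M} (φ : EltsHom x y) (ψ : EltsHom y z) :
    EltsHom x z :=
  ⟨φ.u ≫ ψ.u, φ.v ≫ ψ.v, by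
    calc M.map (((φ.u ≫ ψ.u).op, 𝟙 z.b) : (op z.a, z.b) ⟶ (op x.a, z.b)) z.m
        = M.map ((φ.u.op, 𝟙 z.b) : (op y.a, z.b) ⟶ (op x.a, z.b))
            (M.map ((ψ.u.op, 𝟙 z.b) : (op z.a, z.b) ⟶ (op y.a, z.b)) z.m) := by
          rw [mapmap]
          simp [op_comp]
      _ = M.map ((φ.u.op, 𝟙 z.b) : (op y.a, z.b) ⟶ (op x.a, z.b))
            (M.map ((𝟙 (op y.a), ψ.v) : (op y.a, y.b) ⟶ (op y.a, z.b)) y.m) := by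
          rw [ψ.compat]
      _ = M.map ((𝟙 (op x.a), ψ.v) : (op x.a, y.b) ⟶ (op x.a, z.b))
            (M.map ((φ.u.op, 𝟙 y.b) : (op y.a, y.b) ⟶ (op x.a, y.b)) y.m) := by
          rw [mapmap, mapmap]
          simp
      _ = M.map ((𝟙 (op x.a), ψ.v) : (op x.a, y.b) ⟶ (op x.a, z.b))
            (M.map ((𝟙 (op x.a), φ.v) : (op x.a, x.b) ⟶ (op x.a, y.b)) x.m) := by
          rw [φ.compat]
      _ = M.map ((𝟙 (op x.a), φ.v ≫ ψ.v) : (op x.a, x.b) ⟶ (op x.a, z.b)) x.m := by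
          rw [mapmap]
          simp⟩

instance eltsCategory (M : Prof B A) : Category (Elts M) where
  Hom := EltsHom
  id := EltsHom.id
  comp := EltsHom.comp

/-- The projection to `B`. -/
@[simps]
def eltsToB (M : Prof B A) : Elts M ⥤ B where
  obj x := x.b
  map φ := φ.v

/-- The projection to `A`. -/
@[simps]
def eltsToA (M : Prof B A) : Elts M ⥤ A where
  obj x := x.a
  map φ := φ.u

@[simp] theorem elts_id_u {M : Prof B A} (x : Elts M) : (𝟙 x : x ⟶ x).u = 𝟙 x.a := rfl
@[simp] theorem elts_id_v {M : Prof B A} (x : Elts M) : (𝟙 x : x ⟶ x).v = 𝟙 x.b := rfl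

/-- The basic relation in the coend quotient, phrased for the factorization. -/
theorem factRel (M : Prof B A) {x y : Elts M} (f : x ⟶ y) (p : Aᵒᵖ × B)
    (n : p.1.unop ⟶ x.a) (m : y.b ⟶ p.2) :
    Quot.mk (CRel (upper (eltsToB M)) (lower (eltsToA M)) p) ⟨y, n ≫ f.u, m⟩
      = Quot.mk (CRel (upper (eltsToB M)) (lower (eltsToA M)) p) ⟨x, n, f.v ≫ m⟩ := by
  have h := Quot.sound (CRel.mk (M := upper (eltsToB M)) (N := lower (eltsToA M)) (p := p)
    f n m)
  have hn : (lower (eltsToA M)).map ((𝟙 p.1, f) : (p.1, x) ⟶ (p.1, y)) n = n ≫ f.u := by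
    show (𝟙 p.1 : p.1 ⟶ p.1).unop ≫ n ≫ f.u = n ≫ f.u
    simp
  have hm : (upper (eltsToB M)).map ((f.op, 𝟙 p.2) : (op y, p.2) ⟶ (op x, p.2)) m = f.v ≫ m := by
    show f.v ≫ m ≫ 𝟙 p.2 = f.v ≫ m
    simp
  rw [hn, hm] at h
  exact h

theorem factRel' (M : Prof B A) {x y : Elts M} (f : x ⟶ y) (p : Aᵒᵖ × B)
    (n : p.1.unop ⟶ x.a) (m : y.b ⟶ p.2) (n' : p.1.unop ⟶ y.a) (m' : x.b ⟶ p.2)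
    (hn : n ≫ f.u = n') (hm : f.v ≫ m = m') :
    Quot.mk (CRel (upper (eltsToB M)) (lower (eltsToA M)) p) ⟨y, n', m⟩
      = Quot.mk (CRel (upper (eltsToB M)) (lower (eltsToA M)) p) ⟨x, n, m'⟩ := by
  subst hn hm
  exact factRel M f p n m

/-- The forward map `M ⟶ q_* ∘ p^*`. -/
def factFwd (M : Prof B A) : M ⟶ comp (upper (eltsToB M)) (lower (eltsToA M)) where
  app p := TypeCat.ofHom fun z => Quot.mk _ ⟨⟨p.1.unop, p.2, z⟩, 𝟙 p.1.unop, 𝟙 p.2⟩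
  naturality p q g := by
    ext z
    set u : q.1.unop ⟶ p.1.unop := g.1.unop
    set v : p.2 ⟶ q.2 := g.2
    have hz : M.map g z = M.map ((𝟙 q.1, v) : (q.1, p.2) ⟶ (q.1, q.2))
        (M.map ((g.1, 𝟙 p.2) : (p.1, p.2) ⟶ (q.1, p.2)) z) := by
      rw [mapmap]; simp; rfl
    let xm : Elts M := ⟨q.1.unop, p.2, M.map ((g.1, 𝟙 p.2) : (p.1, p.2) ⟶ (q.1, p.2)) z⟩
    let xp : Elts M := ⟨p.1.unop, p.2, z⟩
    let xq : Elts M := ⟨q.1.unop, q.2, M.map g z⟩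
    have c1 : M.map ((u.op, 𝟙 xp.b) : (op xp.a, xp.b) ⟶ (op xm.a, xp.b)) xp.m
        = M.map ((𝟙 (op xm.a), 𝟙 p.2) : (op xm.a, xm.b) ⟶ (op xm.a, xp.b)) xm.m := by
      rw [mapid]; rfl
    have c2 : M.map (((𝟙 q.1.unop).op, 𝟙 xq.b) : (op xq.a, xq.b) ⟶ (op xm.a, xq.b)) xq.m
        = M.map ((𝟙 (op xm.a), v) : (op xm.a, xm.b) ⟶ (op xm.a, xq.b)) xm.m := by
      show M.map (((𝟙 q.1.unop).op, 𝟙 q.2) : _ ⟶ _) (M.map g z)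
        = M.map ((𝟙 (op q.1.unop), v) : (op q.1.unop, p.2) ⟶ (op q.1.unop, q.2)) xm.m
      rw [← hz]
      exact mapid M _
    have h1 := factRel M (x := xm) (y := xp) ⟨u, 𝟙 p.2, c1⟩ q (𝟙 q.1.unop) v
    have h2 := factRel M (x := xm) (y := xq) ⟨𝟙 q.1.unop, v, c2⟩ q (𝟙 q.1.unop) (𝟙 q.2)
    show Quot.mk _ (⟨xq, 𝟙 q.1.unop, 𝟙 q.2⟩ :
        Pt (upper (eltsToB M)) (lower (eltsToA M)) q)
      = (comp (upper (eltsToB M)) (lower (eltsToA M))).map g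
          (Quot.mk _ ⟨xp, 𝟙 p.1.unop, 𝟙 p.2⟩)
    have hc : (comp (upper (eltsToB M)) (lower (eltsToA M))).map g
          (Quot.mk _ ⟨xp, 𝟙 p.1.unop, 𝟙 p.2⟩)
        = Quot.mk (CRel (upper (eltsToB M)) (lower (eltsToA M)) q) ⟨xp, u, v⟩ := by
      show Quot.mk (CRel (upper (eltsToB M)) (lower (eltsToA M)) q)
          ⟨xp, (lower (eltsToA M)).map ((g.1, 𝟙 xp) : (p.1, xp) ⟶ (q.1, xp)) (𝟙 p.1.unop),
            (upper (eltsToB M)).map ((𝟙 (op xp), g.2) : (op xp, p.2) ⟶ (op xp, q.2)) (𝟙 p.2)⟩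
        = _
      have hn : (lower (eltsToA M)).map ((g.1, 𝟙 xp) : (p.1, xp) ⟶ (q.1, xp)) (𝟙 p.1.unop) = u := by
        show g.1.unop ≫ 𝟙 p.1.unop ≫ 𝟙 p.1.unop = g.1.unop
        simp
      have hm : (upper (eltsToB M)).map ((𝟙 (op xp), g.2) : (op xp, p.2) ⟶ (op xp, q.2)) (𝟙 p.2) = v := by
        show 𝟙 p.2 ≫ 𝟙 p.2 ≫ g.2 = g.2
        simp
      rw [hn, hm]
    rw [hc]
    have e1 : Quot.mk (CRel (upper (eltsToB M)) (lower (eltsToA M)) q) ⟨xq, 𝟙 q.1.unop, 𝟙 q.2⟩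
        = Quot.mk _ ⟨xm, 𝟙 q.1.unop, v⟩ := by
      exact factRel' M (x := xm) (y := xq) ⟨𝟙 q.1.unop, v, c2⟩ q (𝟙 q.1.unop) (𝟙 q.2) (𝟙 q.1.unop) v
        (Category.id_comp _) (Category.comp_id _)
    have e2 : Quot.mk (CRel (upper (eltsToB M)) (lower (eltsToA M)) q) ⟨xp, u, v⟩
        = Quot.mk _ ⟨xm, 𝟙 q.1.unop, v⟩ := by
      have := h1.symm
      exact factRel' M (x := xm) (y := xp) ⟨u, 𝟙 p.2, c1⟩ q (𝟙 q.1.unop) v u v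
        (Category.id_comp _) (Category.id_comp _)
    rw [e1, ← e2]

/-- The backward map `q_* ∘ p^* ⟶ M`. -/
def factBwd (M : Prof B A) : comp (upper (eltsToB M)) (lower (eltsToA M)) ⟶ M where
  app p := TypeCat.ofHom <|
    Quot.lift
      (fun x => M.map ((x.n.op, x.m) : (op x.mid.a, x.mid.b) ⟶ p) x.mid.m)
      (by
        rintro x y h
        cases h with
        | @mk b b' f n m =>
          show M.map
              ((((lower (eltsToA M)).map ((𝟙 p.1, f) : (p.1, b) ⟶ (p.1, b')) n).op, m) :
                (op b'.a, b'.b) ⟶ p) b'.m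
            = M.map ((n.op, (upper (eltsToB M)).map ((f.op, 𝟙 p.2) :
                (op b', p.2) ⟶ (op b, p.2)) m) : (op b.a, b.b) ⟶ p) b.m
          have hsrc : (lower (eltsToA M)).map ((𝟙 p.1, f) : (p.1, b) ⟶ (p.1, b')) n
              = n ≫ f.u := by show (𝟙 p.1 : p.1 ⟶ p.1).unop ≫ n ≫ f.u = n ≫ f.u; simp
          have htgt : (upper (eltsToB M)).map ((f.op, 𝟙 p.2) :
              (op b', p.2) ⟶ (op b, p.2)) m = f.v ≫ m := by
                show f.v ≫ m ≫ 𝟙 p.2 = f.v ≫ m; exact congrArg (fun k => f.v ≫ k) (Category.comp_id _)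
          rw [hsrc, htgt]
          have key : M.map ((f.u.op, 𝟙 b'.b) : (op b'.a, b'.b) ⟶ (op b.a, b'.b)) b'.m
              = M.map ((𝟙 (op b.a), f.v) : (op b.a, b.b) ⟶ (op b.a, b'.b)) b.m := f.compat
          calc M.map (((n ≫ f.u).op, m) : (op b'.a, b'.b) ⟶ p) b'.m
              = M.map ((n.op, m) : (op b.a, b'.b) ⟶ p)
                  (M.map ((f.u.op, 𝟙 b'.b) : (op b'.a, b'.b) ⟶ (op b.a, b'.b)) b'.m) := by
                rw [mapmap]
                exact congrArg (fun (k : ((op b'.a, b'.b) : Aᵒᵖ × B) ⟶ p) => M.map k b'.m)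
                  (congrArg₂ (fun a c => ((a, c) : ((op b'.a, b'.b) : Aᵒᵖ × B) ⟶ p)) op_comp
                    (Category.id_comp m).symm)
            _ = M.map ((n.op, m) : (op b.a, b'.b) ⟶ p)
                  (M.map ((𝟙 (op b.a), f.v) : (op b.a, b.b) ⟶ (op b.a, b'.b)) b.m) := by
                rw [key]
            _ = M.map ((n.op, f.v ≫ m) : (op b.a, b.b) ⟶ p) b.m := by
                rw [mapmap, Category.id_comp])
  naturality p q g := by
    ext x
    induction x using Quot.ind with
    | _ x =>
      show M.map
          ((((lower (eltsToA M)).map ((g.1, 𝟙 x.mid) : (p.1, x.mid) ⟶ (q.1, x.mid)) x.n).op,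
            (upper (eltsToB M)).map ((𝟙 (op x.mid), g.2) :
              (op x.mid, p.2) ⟶ (op x.mid, q.2)) x.m) : (op x.mid.a, x.mid.b) ⟶ q) x.mid.m
        = M.map g (M.map ((x.n.op, x.m) : (op x.mid.a, x.mid.b) ⟶ p) x.mid.m)
      rw [mapmap]
      have hsrc : (lower (eltsToA M)).map ((g.1, 𝟙 x.mid) : (p.1, x.mid) ⟶ (q.1, x.mid)) x.n
          = g.1.unop ≫ x.n := by
            show g.1.unop ≫ x.n ≫ 𝟙 x.mid.a = g.1.unop ≫ x.n
            exact congrArg (fun k => g.1.unop ≫ k) (Category.comp_id _)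
      have htgt : (upper (eltsToB M)).map ((𝟙 (op x.mid), g.2) :
          (op x.mid, p.2) ⟶ (op x.mid, q.2)) x.m = x.m ≫ g.2 := by
            show 𝟙 x.mid.b ≫ x.m ≫ g.2 = x.m ≫ g.2; exact Category.id_comp _
      rw [hsrc, htgt]
      congr 1

theorem fact_hom_inv (M : Prof B A) (p : Aᵒᵖ × B) (z : M.obj p) :
    (factBwd M).app p ((factFwd M).app p z) = z := by
  show M.map (((𝟙 p.1.unop).op, 𝟙 p.2) : _ ⟶ _) z = z
  have : ((𝟙 p.1.unop).op : op p.1.unop ⟶ op p.1.unop) = 𝟙 p.1 := rfl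
  rw [this]
  exact mapid M z

theorem fact_inv_hom (M : Prof B A) (p : Aᵒᵖ × B)
    (x : Pt (upper (eltsToB M)) (lower (eltsToA M)) p) :
    (factFwd M).app p ((factBwd M).app p (Quot.mk _ x)) = Quot.mk _ x := by
  obtain ⟨e, n, m⟩ := x
  show Quot.mk (CRel (upper (eltsToB M)) (lower (eltsToA M)) p)
      ⟨⟨p.1.unop, p.2, M.map ((n.op, m) : (op e.a, e.b) ⟶ p) e.m⟩, 𝟙 p.1.unop, 𝟙 p.2⟩
    = Quot.mk _ ⟨e, n, m⟩
  let xm : Elts M := ⟨p.1.unop, e.b, M.map ((n.op, 𝟙 e.b) : (op e.a, e.b) ⟶ (p.1, e.b)) e.m⟩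
  let y : Elts M := ⟨p.1.unop, p.2, M.map ((n.op, m) : (op e.a, e.b) ⟶ p) e.m⟩
  have c1 : M.map ((n.op, 𝟙 e.b) : (op e.a, e.b) ⟶ (op xm.a, e.b)) e.m
      = M.map ((𝟙 (op xm.a), 𝟙 e.b) : (op xm.a, xm.b) ⟶ (op xm.a, e.b)) xm.m := by
    rw [mapid]
  have c2 : M.map (((𝟙 p.1.unop).op, 𝟙 y.b) : (op y.a, y.b) ⟶ (op xm.a, y.b)) y.m
      = M.map ((𝟙 (op xm.a), m) : (op xm.a, xm.b) ⟶ (op xm.a, y.b)) xm.m := by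
    show M.map (((𝟙 p.1.unop).op, 𝟙 p.2) : _ ⟶ _)
        (M.map ((n.op, m) : (op e.a, e.b) ⟶ p) e.m)
      = M.map ((𝟙 (op p.1.unop), m) : (p.1, e.b) ⟶ (p.1, p.2)) xm.m
    have h1 : ((𝟙 p.1.unop).op : op p.1.unop ⟶ op p.1.unop) = 𝟙 p.1 := rfl
    rw [h1, mapid]
    show M.map ((n.op, m) : (op e.a, e.b) ⟶ p) e.m = _
    rw [mapmap]
    rw [Category.comp_id, Category.id_comp]
  have h1 := factRel M (x := xm) (y := e) ⟨n, 𝟙 e.b, c1⟩ p (𝟙 p.1.unop) m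
  have h2 := factRel M (x := xm) (y := y) ⟨𝟙 p.1.unop, m, c2⟩ p (𝟙 p.1.unop) (𝟙 p.2)
  have e1 : Quot.mk (CRel (upper (eltsToB M)) (lower (eltsToA M)) p) ⟨y, 𝟙 p.1.unop, 𝟙 p.2⟩
      = Quot.mk _ ⟨xm, 𝟙 p.1.unop, m⟩ := by
    exact factRel' M (x := xm) (y := y) ⟨𝟙 p.1.unop, m, c2⟩ p (𝟙 p.1.unop) (𝟙 p.2) (𝟙 p.1.unop) m
      (Category.id_comp _) (Category.comp_id _)
  have e2 : Quot.mk (CRel (upper (eltsToB M)) (lower (eltsToA M)) p) ⟨e, n, m⟩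
      = Quot.mk _ ⟨xm, 𝟙 p.1.unop, m⟩ := by
    have := h1
    exact factRel' M (x := xm) (y := e) ⟨n, 𝟙 e.b, c1⟩ p (𝟙 p.1.unop) m n m
      (Category.id_comp _) (Category.id_comp _)
  rw [e1, ← e2]

/-- Every profunctor `M : Aᵒᵖ × B ⥤ Type` factors through its category of elements:
with `p : E(M) ⥤ B` and `q : E(M) ⥤ A` the projections, there is an isomorphism of
profunctors `M ≅ q_* ∘ p^*` (profunctor composition by coends). -/
theorem profunctor_factors_through_elements (M : Prof B A) :
    Nonempty (M ≅ comp (upper (eltsToB M)) (lower (eltsToA M))) := by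
  exact ⟨{
    hom := factFwd M
    inv := factBwd M
    hom_inv_id := by
      ext p z
      exact fact_hom_inv M p z
    inv_hom_id := by
      ext p x
      induction x using Quot.ind with
      | _ x => exact fact_inv_hom M p x }⟩

end Prof
end
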